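/- arXiv:2408.01027 — 9 statements merged into one kernel-verified Lean document; each statement's English description precedes it below -/
import Mathlib

section
/- For every number of agents n ≥ 2, every number of items m ≥ 1, and every sequence of nonnegative integers (t_1, ..., t_n) with t_1 + ... + t_n = m, there exists a profile of additive valuations (v_1, ..., v_n) with v_i(e_j) ∈ {0, -1} for every agent i and item e_j such that every allocation A = (A_1, ..., A_n) with |A_i| = t_i for all i fails to be Pareto optimal. Consequently, no sequential picking mechanism (one that, for a predetermined sequence (t_1, ..., t_n), always outputs an allocation in which agent i receives exactly t_i items) always returns Pareto optimal allocations for indivisible chores, even when valuations have a binary margin. -/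
open Finset

attribute [local instance] Classical.propDecidable

noncomputable section

/-- The bundle of agent `i` under deterministic allocation `A` (item `j` goes to agent `A j`). -/
def bundle {m n : ℕ} (A : Fin m → Fin n) (i : Fin n) : Finset (Fin m) :=
  Finset.univ.filter fun j => A j = i

/-- Additive value of a bundle. -/
def sval {m : ℕ} (f : Fin m → ℝ) (S : Finset (Fin m)) : ℝ := ∑ j ∈ S, f j

/-- Allocation `B` Pareto dominates allocation `A` under valuation profile `v`. -/
def ParetoDom {m n : ℕ} (v : Fin n → Fin m → ℝ) (B A : Fin m → Fin n) : Prop :=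
  (∀ i, sval (v i) (bundle B i) ≥ sval (v i) (bundle A i)) ∧
  ∃ i, sval (v i) (bundle B i) > sval (v i) (bundle A i)

/-- Pareto optimality of a deterministic allocation. -/
def ParetoOpt {m n : ℕ} (v : Fin n → Fin m → ℝ) (A : Fin m → Fin n) : Prop :=
  ¬ ∃ B, ParetoDom v B A

/-- for every n ≥ 2, m ≥ 1 and nonnegative integers t with ∑ t = m, there is a
binary-margin chores profile such that every allocation giving agent i exactly t i items
fails to be Pareto optimal. Hence no sequential picking mechanism always returns PO
allocations for chores, even with binary margins. -/
theorem no_sequential_picking_PO (n m : ℕ) (hn : 2 ≤ n) (hm : 1 ≤ m)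
    (t : Fin n → ℕ) (ht : ∑ i, t i = m) :
    ∃ v : Fin n → Fin m → ℝ, (∀ i j, v i j = 0 ∨ v i j = -1) ∧
      ∀ A : Fin m → Fin n, (∀ i, (bundle A i).card = t i) → ¬ ParetoOpt v A := by
  obtain ⟨i0, hi0⟩ : ∃ i, 1 ≤ t i := by
    by_contra h
    push_neg at h
    have : ∑ i, t i = 0 := Finset.sum_eq_zero fun i _ => Nat.lt_one_iff.mp (h i)
    omega
  obtain ⟨i1, hi1⟩ : ∃ i1 : Fin n, i1 ≠ i0 :=
    Fintype.exists_ne_of_one_lt_card (by simp; omega) i0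
  refine ⟨fun i j => if i = i0 then -1 else 0, fun i j => ?_, ?_⟩
  · by_cases h : i = i0 <;> simp [h]
  intro A hA hPO
  have hzero : ∀ i : Fin n, i ≠ i0 → ∀ S : Finset (Fin m),
      sval (fun j => if i = i0 then (-1 : ℝ) else 0) S = 0 := by
    intro i hi S
    simp [sval, hi]
  have hval : ∀ S : Finset (Fin m),
      sval (fun j => if i0 = i0 then (-1 : ℝ) else 0) S = -(S.card : ℝ) := by
    intro S
    simp [sval]
  apply hPO
  refine ⟨fun _ => i1, fun i => ?_, i0, ?_⟩
  · by_cases h : i = i0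
    · subst h
      rw [hval, hval]
      have hBi0 : bundle (fun _ : Fin m => i1) i = ∅ := by
        ext j; simp [bundle, hi1]
      rw [hBi0]
      simp
    · rw [hzero i h, hzero i h]
  · rw [hval, hval]
    have hBi0 : bundle (fun _ : Fin m => i1) i0 = ∅ := by
      ext j; simp [bundle, hi1]
    rw [hBi0, hA i0]
    simp
    exact_mod_cast hi0
end
end

section
/- There is no deterministic mechanism for allocating four indivisible chores to two agents with binary additive valuations that is simultaneously strategyproof, Pareto optimal, and equitable up to one item. Precisely: let E = {e_1, e_2, e_3, e_4} and let V be the set of additive valuations v with v(e_j) ∈ {0, -1} for all j; then there is no map M : V × V → {allocations of E to two agents} such that (i) [SP] for every agent i ∈ {1,2}, every true valuation v_i ∈ V, every report v̂_i ∈ V, and every report v̂_{3-i} ∈ V of the other agent, agent i's true utility under M(v_i, v̂_{3-i}) is at least his true utility under M(v̂_i, v̂_{3-i}); (ii) [PO] for every reported profile v̂ ∈ V × V, the allocation M(v̂) is Pareto optimal with respect to v̂; and (iii) [EQ1] for every reported profile v̂ ∈ V × V, the allocation M(v̂) is equitable up to one item with respect to v̂. -/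
open Finset

attribute [local instance] Classical.propDecidable

noncomputable section

/-- Equitability up to one item. -/
def EQ1 {m n : ℕ} (v : Fin n → Fin m → ℝ) (A : Fin m → Fin n) : Prop :=
  ∀ i j : Fin n, sval (v i) (bundle A i) ≥ sval (v j) (bundle A j) ∨
    ∃ e ∈ bundle A i ∪ bundle A j,
      sval (v i) ((bundle A i).erase e) ≥ sval (v j) ((bundle A j).erase e)

/-- Binary additive chore valuations over four items: each item is worth 0 or -1. -/
def BinVal : Type := {v : Fin 4 → ℝ // ∀ j, v j = 0 ∨ v j = -1}

/-! ### Auxiliary material for the impossibility proof -/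

lemma fin2_cases (x : Fin 2) : x = 0 ∨ x = 1 := by revert x; decide

/-- The valuation disliking every item. -/
def vAll : BinVal := ⟨fun _ => -1, fun _ => Or.inr rfl⟩

/-- Given an allocation `A`, the valuation disliking exactly the items not allocated to
agent `0` under `A`. -/
def wv (A : Fin 4 → Fin 2) : BinVal :=
  ⟨fun j => if A j = 0 then 0 else -1, by
    intro j; by_cases h : A j = 0 <;> simp [h]⟩

lemma wv_eq_neg_one_iff (A : Fin 4 → Fin 2) (j : Fin 4) :
    (wv A).1 j = -1 ↔ A j = 1 := by
  rcases fin2_cases (A j) with h | h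
  · have h0 : (wv A).1 j = 0 := by simp [wv, h]
    rw [h0, h]
    constructor
    · intro hc; norm_num at hc
    · intro hc; exact absurd hc (by decide)
  · have h1 : (wv A).1 j = -1 := by
      have : ¬ A j = 0 := by rw [h]; decide
      simp [wv, this]
    rw [h1, h]
    simp

/-- For a binary chore valuation, the value of a set is minus the number of disliked
items in it. -/
lemma sval_eq (f : Fin 4 → ℝ) (hf : ∀ j, f j = 0 ∨ f j = -1) (S : Finset (Fin 4)) :
    sval f S = -(((S.filter fun j => f j = -1).card : ℝ)) := by
  unfold sval
  rw [← Finset.sum_filter_add_sum_filter_not S (fun j => f j = -1)]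
  have h1 : ∑ j ∈ S.filter (fun j => f j = -1), f j
      = (S.filter fun j => f j = -1).card • (-1 : ℝ) := by
    rw [Finset.sum_congr rfl (fun x hx => (Finset.mem_filter.mp hx).2),
      Finset.sum_const]
  have h2 : ∑ j ∈ S.filter (fun j => ¬ f j = -1), f j = 0 := by
    apply Finset.sum_eq_zero
    intro x hx
    rcases hf x with h | h
    · exact h
    · exact absurd h (Finset.mem_filter.mp hx).2
  rw [h1, h2]
  simp

/-- EQ1 for binary chore valuations implies the disliked-item counts differ by at most
one. -/
lemma eq1_card (vhat : Fin 2 → BinVal) {A : Fin 4 → Fin 2}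
    (h : EQ1 (fun i => (vhat i).1) A) (i j : Fin 2) :
    ((bundle A i).filter fun e => (vhat i).1 e = -1).card ≤
      ((bundle A j).filter fun e => (vhat j).1 e = -1).card + 1 := by
  rcases h i j with h | ⟨e, -, h⟩
  · rw [sval_eq _ (vhat i).2, sval_eq _ (vhat j).2] at h
    have : (((bundle A i).filter fun e => (vhat i).1 e = -1).card : ℝ) ≤
        ((bundle A j).filter fun e => (vhat j).1 e = -1).card := by linarith
    have h' : ((bundle A i).filter fun e => (vhat i).1 e = -1).card ≤
        ((bundle A j).filter fun e => (vhat j).1 e = -1).card := by exact_mod_cast this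
    omega
  · rw [sval_eq _ (vhat i).2, sval_eq _ (vhat j).2] at h
    have hje : (((bundle A j).erase e).filter fun x => (vhat j).1 x = -1).card ≤
        ((bundle A j).filter fun x => (vhat j).1 x = -1).card :=
      Finset.card_le_card (Finset.filter_subset_filter _ (Finset.erase_subset _ _))
    have hie : ((bundle A i).filter fun x => (vhat i).1 x = -1).card ≤
        (((bundle A i).erase e).filter fun x => (vhat i).1 x = -1).card + 1 := by
      have hsub : (bundle A i).filter (fun x => (vhat i).1 x = -1) ⊆
          insert e (((bundle A i).erase e).filter fun x => (vhat i).1 x = -1) := by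
        intro x hx
        rcases Finset.mem_filter.mp hx with ⟨hx1, hx2⟩
        by_cases hxe : x = e
        · subst hxe; exact Finset.mem_insert_self x _
        · exact Finset.mem_insert_of_mem
            (Finset.mem_filter.mpr ⟨Finset.mem_erase.mpr ⟨hxe, hx1⟩, hx2⟩)
      calc ((bundle A i).filter (fun x => (vhat i).1 x = -1)).card
          ≤ (insert e (((bundle A i).erase e).filter fun x => (vhat i).1 x = -1)).card :=
            Finset.card_le_card hsub
        _ ≤ _ := Finset.card_insert_le _ _
    have hreal : ((((bundle A i).erase e).filter fun x => (vhat i).1 x = -1).card : ℝ) ≤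
        (((bundle A j).erase e).filter fun x => (vhat j).1 x = -1).card := by linarith
    have hnat : (((bundle A i).erase e).filter fun x => (vhat i).1 x = -1).card ≤
        (((bundle A j).erase e).filter fun x => (vhat j).1 x = -1).card := by
      exact_mod_cast hreal
    omega

/-- The two bundles of a two-agent allocation of four items have `4` items in total. -/
lemma bundle_card_sum (A : Fin 4 → Fin 2) :
    (bundle A 0).card + (bundle A 1).card = 4 := by
  have htwo : ∀ x : Fin 2, x = 1 ↔ ¬ x = 0 := by decide
  have h : bundle A 1 = Finset.univ.filter fun j => ¬ A j = 0 := by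
    unfold bundle
    exact Finset.filter_congr fun j _ => htwo (A j)
  rw [h]
  unfold bundle
  rw [Finset.card_filter_add_card_filter_not]
  simp

/-- no deterministic mechanism for four chores and two agents with binary
additive valuations is simultaneously strategyproof, Pareto optimal and EQ1. -/
theorem no_deterministic_SP_PO_EQ1 :
    ¬ ∃ M : (Fin 2 → BinVal) → (Fin 4 → Fin 2),
      -- (i) strategyproofness
      (∀ (vhat : Fin 2 → BinVal) (i : Fin 2) (vi : BinVal),
        sval vi.1 (bundle (M (Function.update vhat i vi)) i) ≥
          sval vi.1 (bundle (M vhat) i)) ∧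
      -- (ii) Pareto optimality w.r.t. the reported profile
      (∀ vhat : Fin 2 → BinVal, ParetoOpt (fun i => (vhat i).1) (M vhat)) ∧
      -- (iii) EQ1 w.r.t. the reported profile
      (∀ vhat : Fin 2 → BinVal, EQ1 (fun i => (vhat i).1) (M vhat)) := by
  rintro ⟨M, hSP, hPO, hEQ⟩
  -- the all-dislike profile and its allocation
  set A : Fin 4 → Fin 2 := M (fun _ => vAll) with hAdef
  -- Step 1: at the all-dislike profile the split is 2-2.
  have h01 := eq1_card (fun _ => vAll) (hEQ (fun _ => vAll)) 0 1
  have h10 := eq1_card (fun _ => vAll) (hEQ (fun _ => vAll)) 1 0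
  have efil : ∀ i : Fin 2, ((bundle A i).filter
      fun e => ((fun _ : Fin 2 => vAll) i).1 e = -1) = bundle A i :=
    fun i => Finset.filter_true_of_mem fun x _ => rfl
  rw [efil 0, efil 1] at h01 h10
  have hsum := bundle_card_sum A
  have hT2 : (bundle A 0).card = 2 := by omega
  have hTc2 : (bundle A 1).card = 2 := by omega
  -- the deviating profile
  set P : Fin 2 → BinVal := Function.update (fun _ => vAll) 0 (wv A) with hPdef
  set B : Fin 4 → Fin 2 := M P with hBdef
  have hP0 : (P 0).1 = (wv A).1 := by rw [hPdef]; simp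
  have hP1 : (P 1).1 = vAll.1 := by
    rw [hPdef, Function.update_of_ne (by decide)]
  -- Step 2: PO forces every item of `bundle A 0` to agent 0 under `B`.
  have hstep2 : ∀ e, A e = 0 → B e = 0 := by
    intro e hAe
    by_contra hBe0
    have hBe : B e = 1 := (fin2_cases (B e)).resolve_left hBe0
    have hb0 : bundle (Function.update B e 0) 0 = insert e (bundle B 0) := by
      ext x
      by_cases hx : x = e <;> simp [bundle, Function.update, hx]
    have hb1 : bundle (Function.update B e 0) 1 = (bundle B 1).erase e := by
      ext x
      by_cases hx : x = e <;> simp [bundle, Function.update, hx]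
    have heB0 : e ∉ bundle B 0 := by simp [bundle, hBe0]
    have heB1 : e ∈ bundle B 1 := by simp [bundle, hBe]
    have hw0 : (P 0).1 e = 0 := by rw [hP0]; simp [wv, hAe]
    have hw1 : (P 1).1 e = -1 := by rw [hP1]; rfl
    have key0 : sval ((P 0).1) (bundle (Function.update B e 0) 0)
        = sval ((P 0).1) (bundle B 0) := by
      rw [hb0]; unfold sval; rw [Finset.sum_insert heB0, hw0, zero_add]
    have key1 : sval ((P 1).1) (bundle (Function.update B e 0) 1)
        > sval ((P 1).1) (bundle B 1) := by
      rw [hb1]; unfold sval; rw [Finset.sum_erase_eq_sub heB1, hw1]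
      linarith
    apply hPO P
    refine ⟨Function.update B e 0, fun i => ?_, ⟨1, key1⟩⟩
    rcases fin2_cases i with hi | hi <;> subst hi
    · exact key0.ge
    · exact key1.le
  -- Step 3: EQ1 at the deviating profile pins down the counts.
  have h01' := eq1_card P (hEQ P) 0 1
  have h10' := eq1_card P (hEQ P) 1 0
  have hf0 : (bundle B 0).filter (fun e => (P 0).1 e = -1)
      = (bundle B 0).filter (fun e => A e = 1) := by
    apply Finset.filter_congr
    intro x _
    rw [hP0]
    exact_mod_cast wv_eq_neg_one_iff A x
  have hf1 : (bundle B 1).filter (fun e => (P 1).1 e = -1) = bundle B 1 := by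
    apply Finset.filter_true_of_mem
    intro x _
    rw [hP1]; rfl
  simp only [← hBdef] at h01' h10'
  rw [hf0, hf1] at h01' h10'
  -- count identity: the filtered set and `bundle B 1` partition `bundle A 1`
  have hpart : ((bundle B 0).filter fun e => A e = 1) ∪ bundle B 1 = bundle A 1 := by
    ext x
    simp only [Finset.mem_union, Finset.mem_filter, bundle, Finset.mem_filter,
      Finset.mem_univ, true_and]
    constructor
    · rintro (⟨-, h⟩ | h)
      · exact h
      · rcases fin2_cases (A x) with hx | hx
        · exact absurd (hstep2 x hx) (by simp [h])
        · exact hx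
    · intro hx
      rcases fin2_cases (B x) with hb | hb
      · exact Or.inl ⟨hb, hx⟩
      · exact Or.inr hb
  have hdisj : Disjoint ((bundle B 0).filter fun e => A e = 1) (bundle B 1) := by
    rw [Finset.disjoint_left]
    intro x hx hx1
    have h0 : B x = 0 := by
      have := (Finset.filter_subset _ _) hx
      simpa [bundle] using this
    have h1 : B x = 1 := by simpa [bundle] using hx1
    rw [h0] at h1
    exact absurd h1 (by decide)
  have hcards : ((bundle B 0).filter fun e => A e = 1).card + (bundle B 1).card = 2 := by
    rw [← Finset.card_union_of_disjoint hdisj, hpart, hTc2]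
  have hc0 : ((bundle B 0).filter fun e => A e = 1).card = 1 := by omega
  -- Step 4: strategyproofness is violated.
  have hsp : sval (wv A).1 (bundle B 0) ≥ sval (wv A).1 (bundle A 0) :=
    hSP (fun _ => vAll) 0 (wv A)
  have hL : sval (wv A).1 (bundle B 0) = -1 := by
    rw [sval_eq _ (wv A).2]
    have hfe : (bundle B 0).filter (fun j => (wv A).1 j = -1)
        = (bundle B 0).filter (fun e => A e = 1) :=
      Finset.filter_congr fun x _ => by exact_mod_cast wv_eq_neg_one_iff A x
    rw [hfe, hc0]
    norm_num
  have hR : sval (wv A).1 (bundle A 0) = 0 := by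
    rw [sval_eq _ (wv A).2]
    have hfe : (bundle A 0).filter (fun j => (wv A).1 j = -1) = ∅ := by
      apply Finset.filter_false_of_mem
      intro x hx
      have hx0 : A x = 0 := by simpa [bundle] using hx
      rw [wv_eq_neg_one_iff, hx0]
      decide
    rw [hfe]
    simp
  rw [hL, hR] at hsp
  linarith
end
end

section
/- Every ex-ante Pareto optimal randomized allocation is also ex-post Pareto optimal. That is, if a finitely supported probability distribution over deterministic allocations implements a fractional allocation that is not Pareto dominated by any fractional allocation, then every deterministic allocation in the support of the distribution is not Pareto dominated by any deterministic allocation. -/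
open Finset

attribute [local instance] Classical.propDecidable

noncomputable section

/-- `a` is a fractional allocation. -/
def IsFrac {m n : ℕ} (a : Fin m → Fin n → ℝ) : Prop :=
  (∀ j i, 0 ≤ a j i) ∧ ∀ j, ∑ i, a j i = 1

/-- Value of agent `i` under fractional allocation `a`. -/
def fval {m n : ℕ} (vi : Fin m → ℝ) (a : Fin m → Fin n → ℝ) (i : Fin n) : ℝ :=
  ∑ j, a j i * vi j

/-- `p` is a (finitely supported) probability distribution over deterministic allocations. -/
def IsDistr {m n : ℕ} (p : (Fin m → Fin n) → ℝ) : Prop :=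
  (∀ A, 0 ≤ p A) ∧ ∑ A, p A = 1

/-- The fractional allocation implemented by the randomized allocation `p`. -/
def implFrac {m n : ℕ} (p : (Fin m → Fin n) → ℝ) : Fin m → Fin n → ℝ :=
  fun j i => ∑ A, p A * (if A j = i then 1 else 0)

/-- an ex-ante Pareto optimal randomized allocation is ex-post Pareto optimal. -/
theorem exante_PO_implies_expost_PO (n m : ℕ)
    (v : Fin n → Fin m → ℝ) (p : (Fin m → Fin n) → ℝ) (hp : IsDistr p)
    (hPO : ¬ ∃ b : Fin m → Fin n → ℝ, IsFrac b ∧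
        (∀ i, fval (v i) b i ≥ fval (v i) (implFrac p) i) ∧
        ∃ i, fval (v i) b i > fval (v i) (implFrac p) i) :
    ∀ A : Fin m → Fin n, 0 < p A → ¬ ∃ B : Fin m → Fin n, ParetoDom v B A := by
  have fval_impl : ∀ (vi : Fin m → ℝ) (q : (Fin m → Fin n) → ℝ) (i : Fin n),
      fval vi (implFrac q) i = ∑ C, q C * sval vi (bundle C i) := by
    intro vi q i
    unfold fval implFrac sval bundle
    simp_rw [Finset.sum_mul]
    rw [Finset.sum_comm]
    refine Finset.sum_congr rfl fun C _ => ?_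
    rw [Finset.sum_filter, Finset.mul_sum]
    refine Finset.sum_congr rfl fun j _ => ?_
    by_cases h : C j = i <;> simp [h]
  rintro A hpA ⟨B, hB⟩
  have hBA : B ≠ A := by
    rintro rfl
    obtain ⟨i, hi⟩ := hB.2
    exact lt_irrefl _ hi
  set p' : (Fin m → Fin n) → ℝ :=
    fun C => if C = A then 0 else if C = B then p B + p A else p C with hp'def
  have hsum : ∀ f : (Fin m → Fin n) → ℝ,
      ∑ C, p' C * f C = (∑ C, p C * f C) + p A * (f B - f A) := by
    intro f
    have key : ∑ C, (p' C * f C - p C * f C) = p A * (f B - f A) := by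
      rw [← Finset.sum_subset (Finset.subset_univ ({A, B} : Finset _))
        (fun C _ hC => by
          simp only [Finset.mem_insert, Finset.mem_singleton, not_or] at hC
          simp [hp'def, hC.1, hC.2])]
      rw [Finset.sum_pair (Ne.symm hBA)]
      simp only [hp'def, if_pos rfl, if_neg hBA, if_true]
      ring
    rw [Finset.sum_sub_distrib] at key
    linarith
  have hp'nn : ∀ C, 0 ≤ p' C := by
    intro C
    simp only [hp'def]
    split_ifs <;> [exact le_refl 0; linarith [hp.1 A, hp.1 B]; exact hp.1 C]
  have hp'sum : ∑ C, p' C = 1 := by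
    have := hsum (fun _ => 1)
    simpa [hp.2] using this
  refine hPO ⟨implFrac p', ⟨fun j i => Finset.sum_nonneg fun C _ => by
      have := hp'nn C; positivity, fun j => ?_⟩, fun i => ?_, ?_⟩
  · unfold implFrac
    rw [Finset.sum_comm]
    calc ∑ C, ∑ i, p' C * (if C j = i then 1 else 0)
        = ∑ C, p' C := by
          refine Finset.sum_congr rfl fun C _ => ?_
          rw [← Finset.mul_sum]
          simp
      _ = 1 := hp'sum
  · rw [fval_impl, fval_impl, hsum]
    have h1 := hB.1 i
    nlinarith [hpA.le]
  · obtain ⟨i, hi⟩ := hB.2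
    refine ⟨i, ?_⟩
    rw [fval_impl, fval_impl, hsum]
    nlinarith
end
end

section
/- In the RandChore mechanism, replacing an agent's false nonzero reports on items he truly values at zero by truthful zero reports cannot decrease any deviating agent's expected utility. Precisely: fix a set S ⊆ N of agents with true valuations v_S, a reported profile (v̂_S, v̂_{-S}) with v̂_S ≠ v_S, and define v̂'_S by: for each i ∈ S and each item e_j, v̂'_i(e_j) = 0 if v_i(e_j) = 0, and v̂'_i(e_j) = v̂_i(e_j) otherwise. Then for every i ∈ S, agent i's expected true utility under RandChore(v̂'_S, v̂_{-S}) is at least his expected true utility under RandChore(v̂_S, v̂_{-S}). -/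
open Finset

attribute [local instance] Classical.propDecidable

noncomputable section

/-- The set `Q` of (indices of) items on which some agent reports value zero. -/
def chQ {n m : ℕ} (r : Fin n → Fin m → ℝ) : Finset (Fin m) :=
  Finset.univ.filter fun q => ∃ i, r i q = 0

/-- The set of agents reporting value zero on item `q`. -/
def chZ {n m : ℕ} (r : Fin n → Fin m → ℝ) (q : Fin m) : Finset (Fin n) :=
  Finset.univ.filter fun i => r i q = 0

/-- The position of item `q ∈ Q̄` in the list of the items of `Q̄` sorted in nonincreasing
order of inherent value `w`, ties broken by smallest index. -/
def chRank {n m : ℕ} (w : Fin m → ℝ) (r : Fin n → Fin m → ℝ) (q : Fin m) : ℕ :=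
  (((chQ r)ᶜ).filter fun q' => w q' > w q ∨ (w q' = w q ∧ q' < q)).card

/-- The probability that mechanism `RandChore`, on reported profile `r` (inherent values `w`),
outputs the deterministic allocation `A`: each item of `Q` goes independently and uniformly to
an agent reporting zero on it, and the items of `Q̄` are allocated round-robin (in nonincreasing
inherent value, ties by index) according to a uniformly random permutation of the agents. -/
def randChoreProb {n m : ℕ} (hn : 0 < n) (w : Fin m → ℝ) (r : Fin n → Fin m → ℝ)
    (A : Fin m → Fin n) : ℝ :=
  ((∑ σ : Equiv.Perm (Fin n),
      if ∀ q ∈ (chQ r)ᶜ, A q = σ ⟨chRank w r q % n, Nat.mod_lt _ hn⟩ then (1 : ℝ) else 0)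
    / (Fintype.card (Equiv.Perm (Fin n)) : ℝ))
  * ∏ q ∈ chQ r, (if r (A q) q = 0 then (1 : ℝ) / ((chZ r q).card : ℝ) else 0)

/-- The expected utility, under `RandChore` on reported profile `r`, of agent `i` whose true
additive valuation is `vi`. -/
def randChoreExp {n m : ℕ} (hn : 0 < n) (w : Fin m → ℝ) (r : Fin n → Fin m → ℝ)
    (vi : Fin m → ℝ) (i : Fin n) : ℝ :=
  ∑ A : Fin m → Fin n, randChoreProb hn w r A * sval vi (bundle A i)

namespace RandChoreAux

variable {n m : ℕ}

/-- The marginal probability that item `j` goes to agent `i`. -/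
def marg (hn : 0 < n) (w : Fin m → ℝ) (r : Fin n → Fin m → ℝ) (i : Fin n) (j : Fin m) : ℝ :=
  ∑ A : Fin m → Fin n, randChoreProb hn w r A * (if A j = i then 1 else 0)

lemma exp_eq (hn : 0 < n) (w : Fin m → ℝ) (r : Fin n → Fin m → ℝ) (vi : Fin m → ℝ)
    (i : Fin n) :
    randChoreExp hn w r vi i = ∑ j : Fin m, vi j * marg hn w r i j := by
  have key : ∀ A : Fin m → Fin n,
      randChoreProb hn w r A * sval vi (bundle A i)
        = ∑ j : Fin m, vi j * (randChoreProb hn w r A * (if A j = i then 1 else 0)) := by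
    intro A
    unfold sval bundle
    rw [Finset.sum_filter, Finset.mul_sum]
    refine Finset.sum_congr rfl fun j _ => ?_
    by_cases h : A j = i
    · simp [h]; ring
    · simp [h]
  unfold randChoreExp
  simp_rw [key]
  rw [Finset.sum_comm]
  unfold marg
  simp_rw [← Finset.mul_sum]

/-- The auxiliary per-item weight function. -/
def gfun (hn : 0 < n) (w : Fin m → ℝ) (r : Fin n → Fin m → ℝ) (i : Fin n) (j : Fin m)
    (σ : Equiv.Perm (Fin n)) (q : Fin m) (a : Fin n) : ℝ :=
  (if q ∈ chQ r then (if r a q = 0 then (1:ℝ) / ((chZ r q).card : ℝ) else 0)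
   else if a = σ ⟨chRank w r q % n, Nat.mod_lt _ hn⟩ then (1:ℝ) else 0) *
  (if q = j then (if a = i then (1:ℝ) else 0) else 1)

lemma prob_mul_ind (hn : 0 < n) (w : Fin m → ℝ) (r : Fin n → Fin m → ℝ) (i : Fin n)
    (j : Fin m) (A : Fin m → Fin n) :
    randChoreProb hn w r A * (if A j = i then (1:ℝ) else 0)
      = (∑ σ : Equiv.Perm (Fin n), ∏ q : Fin m, gfun hn w r i j σ q (A q))
        / (Fintype.card (Equiv.Perm (Fin n)) : ℝ) := by
  have expand : ∀ σ : Equiv.Perm (Fin n),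
      (∏ q : Fin m, gfun hn w r i j σ q (A q))
        = (if ∀ q ∈ (chQ r)ᶜ, A q = σ ⟨chRank w r q % n, Nat.mod_lt _ hn⟩ then (1:ℝ) else 0)
          * (∏ q ∈ chQ r, (if r (A q) q = 0 then (1:ℝ) / ((chZ r q).card : ℝ) else 0))
          * (if A j = i then (1:ℝ) else 0) := by
    intro σ
    have h1 : (∏ q : Fin m, gfun hn w r i j σ q (A q))
        = (∏ q : Fin m, (if q ∈ chQ r then (if r (A q) q = 0 then (1:ℝ) / ((chZ r q).card : ℝ) else 0)
            else if A q = σ ⟨chRank w r q % n, Nat.mod_lt _ hn⟩ then (1:ℝ) else 0))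
          * ∏ q : Fin m, (if q = j then (if A q = i then (1:ℝ) else 0) else 1) := by
      rw [← Finset.prod_mul_distrib]
      rfl
    have h2 : (∏ q : Fin m, (if q = j then (if A q = i then (1:ℝ) else 0) else 1))
        = (if A j = i then (1:ℝ) else 0) := by
      rw [Finset.prod_ite_eq' Finset.univ j (fun q => if A q = i then (1:ℝ) else 0)]
      simp
    have h3 : (∏ q : Fin m, (if q ∈ chQ r then (if r (A q) q = 0 then (1:ℝ) / ((chZ r q).card : ℝ) else 0)
            else if A q = σ ⟨chRank w r q % n, Nat.mod_lt _ hn⟩ then (1:ℝ) else 0))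
        = (∏ q ∈ chQ r, (if r (A q) q = 0 then (1:ℝ) / ((chZ r q).card : ℝ) else 0)) *
          ∏ q ∈ (chQ r)ᶜ, (if A q = σ ⟨chRank w r q % n, Nat.mod_lt _ hn⟩ then (1:ℝ) else 0) := by
      rw [← Finset.prod_mul_prod_compl (chQ r)]
      congr 1
      · exact Finset.prod_congr rfl fun q hq => if_pos hq
      · exact Finset.prod_congr rfl fun q hq => if_neg (Finset.mem_compl.mp hq)
    rw [h1, h2, h3]
    by_cases hall : ∀ q ∈ (chQ r)ᶜ, A q = σ ⟨chRank w r q % n, Nat.mod_lt _ hn⟩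
    · rw [if_pos hall]
      have : (∏ q ∈ (chQ r)ᶜ, (if A q = σ ⟨chRank w r q % n, Nat.mod_lt _ hn⟩
          then (1:ℝ) else 0)) = 1 :=
        Finset.prod_eq_one fun q hq => if_pos (hall q hq)
      rw [this]
      ring
    · rw [if_neg hall]
      push_neg at hall
      obtain ⟨q0, hq0, hne0⟩ := hall
      have hz : (∏ q ∈ (chQ r)ᶜ, (if A q = σ ⟨chRank w r q % n, Nat.mod_lt _ hn⟩
          then (1:ℝ) else 0)) = 0 :=
        Finset.prod_eq_zero hq0 (by rw [if_neg hne0])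
      rw [hz]
      ring
  unfold randChoreProb
  rw [div_mul_eq_mul_div, div_mul_eq_mul_div, Finset.sum_mul, Finset.sum_mul]
  congr 1
  exact Finset.sum_congr rfl fun σ _ => (expand σ).symm

lemma sum_f_eq_one (r : Fin n → Fin m → ℝ) (q : Fin m) (hq : q ∈ chQ r) :
    (∑ a : Fin n, (if r a q = 0 then (1:ℝ) / ((chZ r q).card : ℝ) else 0)) = 1 := by
  have hcard : 0 < (chZ r q).card := by
    obtain ⟨i0, hi0⟩ := (Finset.mem_filter.mp hq).2
    exact Finset.card_pos.mpr ⟨i0, Finset.mem_filter.mpr ⟨Finset.mem_univ _, hi0⟩⟩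
  have hmem : ∀ a : Fin n, (if r a q = 0 then (1:ℝ) / ((chZ r q).card : ℝ) else 0)
      = if a ∈ chZ r q then (1:ℝ) / ((chZ r q).card : ℝ) else 0 := by
    intro a
    by_cases hz : r a q = 0
    · simp [chZ, hz]
    · simp [chZ, hz]
  simp_rw [hmem]
  rw [Finset.sum_ite_mem, Finset.univ_inter, Finset.sum_const, nsmul_eq_mul]
  have : ((chZ r q).card : ℝ) ≠ 0 := by positivity
  field_simp

lemma sum_g (hn : 0 < n) (w : Fin m → ℝ) (r : Fin n → Fin m → ℝ) (i : Fin n) (j : Fin m)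
    (σ : Equiv.Perm (Fin n)) (q : Fin m) :
    (∑ a : Fin n, gfun hn w r i j σ q a)
      = if q = j then
          (if j ∈ chQ r then (if r i j = 0 then 1 / ((chZ r j).card : ℝ) else 0)
           else if σ ⟨chRank w r j % n, Nat.mod_lt _ hn⟩ = i then (1:ℝ) else 0)
        else 1 := by
  by_cases hqj : q = j
  · subst hqj
    rw [if_pos rfl]
    by_cases hQ : q ∈ chQ r
    · rw [if_pos hQ]
      have hg : ∀ a : Fin n, gfun hn w r i q σ q a
          = if a = i then (if r a q = 0 then (1:ℝ) / ((chZ r q).card : ℝ) else 0) else 0 := by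
        intro a
        unfold gfun
        rw [if_pos hQ, if_pos rfl]
        by_cases ha : a = i
        · rw [if_pos ha, if_pos ha, mul_one]
        · rw [if_neg ha, if_neg ha, mul_zero]
      simp_rw [hg]
      rw [Finset.sum_ite_eq' Finset.univ i]
      simp
    · rw [if_neg hQ]
      have hg : ∀ a : Fin n, gfun hn w r i q σ q a
          = if a = i then (if a = σ ⟨chRank w r q % n, Nat.mod_lt _ hn⟩ then (1:ℝ) else 0)
            else 0 := by
        intro a
        unfold gfun
        rw [if_neg hQ, if_pos rfl]
        by_cases ha : a = i
        · rw [if_pos ha, if_pos ha, mul_one]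
        · rw [if_neg ha, if_neg ha, mul_zero]
      simp_rw [hg]
      rw [Finset.sum_ite_eq' Finset.univ i]
      simp [eq_comm]
  · rw [if_neg hqj]
    have hg : ∀ a : Fin n, gfun hn w r i j σ q a
        = (if q ∈ chQ r then (if r a q = 0 then (1:ℝ) / ((chZ r q).card : ℝ) else 0)
           else if a = σ ⟨chRank w r q % n, Nat.mod_lt _ hn⟩ then (1:ℝ) else 0) := by
      intro a
      unfold gfun
      rw [if_neg hqj, mul_one]
    simp_rw [hg]
    by_cases hQ : q ∈ chQ r
    · simp_rw [if_pos hQ]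
      exact sum_f_eq_one r q hQ
    · simp_rw [if_neg hQ]
      simp

lemma sum_perm_const (p i i' : Fin n) :
    (∑ σ : Equiv.Perm (Fin n), if σ p = i' then (1:ℝ) else 0)
      = ∑ σ : Equiv.Perm (Fin n), if σ p = i then (1:ℝ) else 0 := by
  refine Fintype.sum_equiv (Equiv.mulLeft (Equiv.swap i i')) _ _ fun σ => ?_
  simp only [Equiv.coe_mulLeft, Equiv.Perm.mul_apply]
  by_cases h : σ p = i'
  · simp [h, Equiv.swap_apply_right]
  · have h2 : Equiv.swap i i' (σ p) ≠ i := by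
      intro hc
      exact h ((Equiv.swap i i').injective (hc.trans (Equiv.swap_apply_right i i').symm))
    simp [h, h2]

lemma sum_perm_eq (hn : 0 < n) (p i : Fin n) :
    (∑ σ : Equiv.Perm (Fin n), if σ p = i then (1:ℝ) else 0)
      = (Fintype.card (Equiv.Perm (Fin n)) : ℝ) / n := by
  have key : (n : ℝ) * (∑ σ : Equiv.Perm (Fin n), if σ p = i then (1:ℝ) else 0)
      = (Fintype.card (Equiv.Perm (Fin n)) : ℝ) := by
    calc (n:ℝ) * ∑ σ : Equiv.Perm (Fin n), (if σ p = i then (1:ℝ) else 0)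
        = ∑ _i' : Fin n, ∑ σ : Equiv.Perm (Fin n), (if σ p = i then (1:ℝ) else 0) := by
          rw [Finset.sum_const, Finset.card_univ, Fintype.card_fin, nsmul_eq_mul]
      _ = ∑ i' : Fin n, ∑ σ : Equiv.Perm (Fin n), (if σ p = i' then (1:ℝ) else 0) :=
          Finset.sum_congr rfl fun i' _ => (sum_perm_const p i i').symm
      _ = ∑ σ : Equiv.Perm (Fin n), ∑ i' : Fin n, (if σ p = i' then (1:ℝ) else 0) :=
          Finset.sum_comm
      _ = ∑ _σ : Equiv.Perm (Fin n), (1:ℝ) :=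
          Finset.sum_congr rfl fun σ _ => by simp
      _ = (Fintype.card (Equiv.Perm (Fin n)) : ℝ) := by
          rw [Finset.sum_const, Finset.card_univ, nsmul_eq_mul, mul_one]
  have hn' : (n:ℝ) ≠ 0 := by positivity
  rw [eq_div_iff hn']
  linarith [key]

lemma marg_eq (hn : 0 < n) (w : Fin m → ℝ) (r : Fin n → Fin m → ℝ) (i : Fin n) (j : Fin m) :
    marg hn w r i j =
      if j ∈ chQ r then (if r i j = 0 then 1 / ((chZ r j).card : ℝ) else 0)
      else 1 / (n : ℝ) := by
  have hN0 : ((Fintype.card (Equiv.Perm (Fin n)) : ℝ)) ≠ 0 := by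
    have := Fintype.card_pos (α := Equiv.Perm (Fin n))
    positivity
  have step1 : marg hn w r i j
      = (∑ σ : Equiv.Perm (Fin n), ∑ A : Fin m → Fin n, ∏ q : Fin m, gfun hn w r i j σ q (A q))
        / (Fintype.card (Equiv.Perm (Fin n)) : ℝ) := by
    unfold marg
    simp_rw [prob_mul_ind hn w r i j]
    rw [← Finset.sum_div, Finset.sum_comm]
  have step2 : ∀ σ : Equiv.Perm (Fin n),
      (∑ A : Fin m → Fin n, ∏ q : Fin m, gfun hn w r i j σ q (A q))
        = ∏ q : Fin m, ∑ a : Fin n, gfun hn w r i j σ q a :=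
    fun σ => (Fintype.prod_sum (fun q a => gfun hn w r i j σ q a)).symm
  have step3 : ∀ σ : Equiv.Perm (Fin n),
      (∏ q : Fin m, ∑ a : Fin n, gfun hn w r i j σ q a)
        = (if j ∈ chQ r then (if r i j = 0 then 1 / ((chZ r j).card : ℝ) else 0)
           else if σ ⟨chRank w r j % n, Nat.mod_lt _ hn⟩ = i then (1:ℝ) else 0) := by
    intro σ
    simp_rw [sum_g hn w r i j σ]
    rw [Finset.prod_ite_eq' Finset.univ j]
    simp
  rw [step1]
  simp_rw [step2, step3]
  by_cases hQ : j ∈ chQ r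
  · rw [if_pos hQ]
    simp_rw [if_pos hQ]
    rw [Finset.sum_const, Finset.card_univ, nsmul_eq_mul, mul_comm, mul_div_assoc,
      div_self hN0, mul_one]
  · rw [if_neg hQ]
    simp_rw [if_neg hQ]
    rw [sum_perm_eq hn, div_right_comm, div_self hN0]

end RandChoreAux

open RandChoreAux in
/-- in `RandChore`, replacing an agent's false nonzero reports on items he truly
values at zero by truthful zero reports cannot decrease any deviating agent's expected utility. -/
theorem randChore_zero_correction (n m : ℕ) (hn : 0 < n)
    (w : Fin m → ℝ) (hw : ∀ j, w j < 0)
    (v : Fin n → Fin m → ℝ) (hv : ∀ i j, v i j = 0 ∨ v i j = w j)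
    (S : Finset (Fin n))
    (r : Fin n → Fin m → ℝ) (hr : ∀ i j, r i j = 0 ∨ r i j = w j)
    (hne : ∃ i ∈ S, r i ≠ v i)
    (r' : Fin n → Fin m → ℝ)
    (hr' : ∀ i j, r' i j = if i ∈ S then (if v i j = 0 then 0 else r i j) else r i j) :
    ∀ i ∈ S, randChoreExp hn w r' (v i) i ≥ randChoreExp hn w r (v i) i := by
  have hzero : ∀ k (q : Fin m), r k q = 0 → r' k q = 0 := by
    intro k q hk
    rw [hr' k q]
    split_ifs
    · rfl
    · exact hk
    · exact hk
  have hQsub : chQ r ⊆ chQ r' := by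
    intro q hq
    obtain ⟨k, hk⟩ := (Finset.mem_filter.mp hq).2
    exact Finset.mem_filter.mpr ⟨Finset.mem_univ _, ⟨k, hzero k q hk⟩⟩
  have hZsub : ∀ q, chZ r q ⊆ chZ r' q := by
    intro q k hk
    exact Finset.mem_filter.mpr ⟨Finset.mem_univ _, hzero k q (Finset.mem_filter.mp hk).2⟩
  intro i hiS
  rw [exp_eq, exp_eq, ge_iff_le]
  apply Finset.sum_le_sum
  intro j _
  rcases hv i j with h0 | hwj
  · rw [h0]; simp
  · have hvne : v i j ≠ 0 := by rw [hwj]; exact (hw j).ne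
    have hri' : r' i j = r i j := by rw [hr' i j, if_pos hiS, if_neg hvne]
    have hmle : marg hn w r' i j ≤ marg hn w r i j := by
      rw [marg_eq, marg_eq]
      by_cases hjQ : j ∈ chQ r
      · have hjQ' : j ∈ chQ r' := hQsub hjQ
        rw [if_pos hjQ, if_pos hjQ', hri']
        by_cases hz : r i j = 0
        · rw [if_pos hz, if_pos hz]
          have h1 : 0 < ((chZ r j).card : ℝ) := by
            have hcard : 0 < (chZ r j).card := by
              obtain ⟨k, hk⟩ := (Finset.mem_filter.mp hjQ).2
              exact Finset.card_pos.mpr ⟨k, Finset.mem_filter.mpr ⟨Finset.mem_univ _, hk⟩⟩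
            exact_mod_cast hcard
          have h2 : ((chZ r j).card : ℝ) ≤ ((chZ r' j).card : ℝ) := by
            exact_mod_cast Finset.card_le_card (hZsub j)
          exact one_div_le_one_div_of_le h1 h2
        · rw [if_neg hz, if_neg hz]
      · rw [if_neg hjQ]
        by_cases hjQ' : j ∈ chQ r'
        · rw [if_pos hjQ']
          have hr0 : r' i j ≠ 0 := by
            rw [hri']
            intro hc
            exact hjQ (Finset.mem_filter.mpr ⟨Finset.mem_univ _, ⟨i, hc⟩⟩)
          rw [if_neg hr0]
          positivity
        · rw [if_neg hjQ']
    have hvle : v i j ≤ 0 := by rw [hwj]; exact (hw j).le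
    exact mul_le_mul_of_nonpos_left hmle hvle
end
end

section
/- In the RandChore mechanism, for any coalition the total expected utility is maximized by truthful reporting: for every set S ⊆ N of agents with true valuations v_S, every fixed reported valuations v̂_{-S} of the other agents, and every reported valuations v̂_S of the agents in S, the sum over i ∈ S of agent i's expected true utility under RandChore(v_S, v̂_{-S}) is at least the sum over i ∈ S of agent i's expected true utility under RandChore(v̂_S, v̂_{-S}). -/
open Finset

attribute [local instance] Classical.propDecidable

noncomputable section

/-- Auxiliary: marginal probability that item `j` goes to agent `i`. -/
def itemProb {n m : ℕ} (r : Fin n → Fin m → ℝ) (j : Fin m) (i : Fin n) : ℝ :=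
  if j ∈ chQ r then (if r i j = 0 then 1 / ((chZ r j).card : ℝ) else 0) else 1 / (n : ℝ)

/-- Auxiliary: factored per-item weight. -/
def chF {n m : ℕ} (hn : 0 < n) (w : Fin m → ℝ) (r : Fin n → Fin m → ℝ)
    (j : Fin m) (i : Fin n) (σ : Equiv.Perm (Fin n)) (q : Fin m) (a : Fin n) : ℝ :=
  (if q ∈ chQ r then (if r a q = 0 then 1 / ((chZ r q).card : ℝ) else 0)
    else (if a = σ ⟨chRank w r q % n, Nat.mod_lt _ hn⟩ then 1 else 0))
  * (if q = j then (if a = i then 1 else 0) else 1)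

theorem sum_perm_ind (n : ℕ) (k i : Fin n) :
    ∑ σ : Equiv.Perm (Fin n), (if σ k = i then (1:ℝ) else 0)
      = (Fintype.card (Equiv.Perm (Fin n)) : ℝ) / n := by
  classical
  set c : Fin n → ℕ := fun a => (univ.filter fun σ : Equiv.Perm (Fin n) => σ k = a).card with hc
  have hceq : ∀ a b : Fin n, c a = c b := by
    intro a b
    apply Finset.card_bij' (fun σ _ => σ.trans (Equiv.swap a b)) (fun σ _ => σ.trans (Equiv.swap a b))
    · intro σ _
      ext x
      simp [Equiv.trans_apply, Equiv.swap_apply_self]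
    · intro σ _
      ext x
      simp [Equiv.trans_apply, Equiv.swap_apply_self]
    · intro σ hσ
      simp only [mem_filter, mem_univ, true_and, Equiv.trans_apply] at hσ ⊢
      rw [hσ, Equiv.swap_apply_left]
    · intro σ hσ
      simp only [mem_filter, mem_univ, true_and, Equiv.trans_apply] at hσ ⊢
      rw [hσ, Equiv.swap_apply_right]
  have hsum : ∑ a : Fin n, c a = Fintype.card (Equiv.Perm (Fin n)) := by
    rw [← Finset.card_univ,
      Finset.card_eq_sum_card_fiberwise (f := fun σ : Equiv.Perm (Fin n) => σ k)
        (t := univ) (fun _ _ => mem_univ _)]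
  have hpos : 0 < n := k.pos
  have hcn : (c i : ℝ) * n = (Fintype.card (Equiv.Perm (Fin n)) : ℝ) := by
    have h1 : n * c i = ∑ a : Fin n, c a := by
      rw [Finset.sum_congr rfl fun a _ => hceq a i]
      simp [mul_comm]
    have h2 := h1.trans hsum
    push_cast [← h2]
    ring
  rw [Finset.sum_boole]
  rw [eq_div_iff (by exact_mod_cast hpos.ne' : (n:ℝ) ≠ 0)]
  exact hcn

lemma chF_sum_ne {n m : ℕ} (hn : 0 < n) (w : Fin m → ℝ) (r : Fin n → Fin m → ℝ)
    (j : Fin m) (i : Fin n) (σ : Equiv.Perm (Fin n)) (q : Fin m) (hq : q ≠ j) :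
    ∑ a : Fin n, chF hn w r j i σ q a = 1 := by
  simp only [chF, if_neg hq, mul_one]
  by_cases hqQ : q ∈ chQ r
  · simp only [if_pos hqQ]
    have hz : (chZ r q).Nonempty := by
      simp only [chQ, mem_filter, mem_univ, true_and] at hqQ
      obtain ⟨a, ha⟩ := hqQ
      exact ⟨a, by simp [chZ, ha]⟩
    have hc : ((chZ r q).card : ℝ) ≠ 0 := by
      exact_mod_cast (Finset.card_pos.mpr hz).ne'
    rw [← Finset.sum_filter]
    have : (univ.filter fun a => r a q = 0) = chZ r q := rfl
    rw [this, Finset.sum_const, nsmul_eq_mul, mul_one_div, div_self hc]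
  · simp only [if_neg hqQ]
    rw [Finset.sum_ite_eq' univ _ (fun _ => (1:ℝ))]
    simp

lemma randChore_marginal {n m : ℕ} (hn : 0 < n) (w : Fin m → ℝ) (r : Fin n → Fin m → ℝ)
    (j : Fin m) (i : Fin n) :
    ∑ A : Fin m → Fin n, randChoreProb hn w r A * (if A j = i then 1 else 0)
      = itemProb r j i := by
  set N : ℝ := (Fintype.card (Equiv.Perm (Fin n)) : ℝ) with hN
  have hNne : N ≠ 0 := by
    rw [hN]
    exact_mod_cast Fintype.card_ne_zero
  have h1 : ∀ A : Fin m → Fin n, randChoreProb hn w r A * (if A j = i then 1 else 0)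
      = (∑ σ : Equiv.Perm (Fin n), ∏ q : Fin m, chF hn w r j i σ q (A q)) / N := by
    intro A
    have hprod : ∀ σ : Equiv.Perm (Fin n),
        ∏ q : Fin m, chF hn w r j i σ q (A q)
          = (∏ q ∈ chQ r, (if r (A q) q = 0 then (1 : ℝ) / ((chZ r q).card : ℝ) else 0))
            * (if ∀ q ∈ (chQ r)ᶜ, A q = σ ⟨chRank w r q % n, Nat.mod_lt _ hn⟩ then (1:ℝ) else 0)
            * (if A j = i then 1 else 0) := by
      intro σ
      rw [show (fun q => chF hn w r j i σ q (A q)) = fun q =>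
        ((if q ∈ chQ r then (if r (A q) q = 0 then 1 / ((chZ r q).card : ℝ) else 0)
          else (if A q = σ ⟨chRank w r q % n, Nat.mod_lt _ hn⟩ then 1 else 0))
        * (if q = j then (if A q = i then 1 else 0) else 1)) from rfl]
      rw [Finset.prod_mul_distrib]
      congr 1
      · rw [← Finset.prod_mul_prod_compl (chQ r)]
        congr 1
        · exact Finset.prod_congr rfl fun q hq => if_pos hq
        · rw [Finset.prod_congr rfl fun q hq => if_neg (Finset.mem_compl.mp hq),
            Finset.prod_boole]
          congr
      · rw [Finset.prod_ite_eq' univ j (fun q => if A q = i then (1:ℝ) else 0)]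
        simp
    rw [Finset.sum_congr rfl fun σ _ => hprod σ, ← Finset.sum_mul, ← Finset.mul_sum,
      randChoreProb]
    ring
  rw [Finset.sum_congr rfl fun A _ => h1 A, ← Finset.sum_div, Finset.sum_comm]
  have h2 : ∀ σ : Equiv.Perm (Fin n),
      ∑ A : Fin m → Fin n, ∏ q : Fin m, chF hn w r j i σ q (A q)
        = ∑ a : Fin n, chF hn w r j i σ j a := by
    intro σ
    rw [show (univ : Finset (Fin m → Fin n)) = Fintype.piFinset (fun _ => univ)
        from Fintype.piFinset_univ.symm,
      ← Finset.prod_univ_sum (fun _ => (univ : Finset (Fin n))) (chF hn w r j i σ)]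
    exact Finset.prod_eq_single_of_mem j (mem_univ j)
      fun q _ hq => chF_sum_ne hn w r j i σ q hq
  rw [Finset.sum_congr rfl fun σ _ => h2 σ]
  by_cases hj : j ∈ chQ r
  · have : ∀ σ : Equiv.Perm (Fin n), ∑ a : Fin n, chF hn w r j i σ j a
        = (if r i j = 0 then 1 / ((chZ r j).card : ℝ) else 0) := by
      intro σ
      simp only [chF, if_pos hj, if_pos rfl, if_true]
      rw [Finset.sum_congr rfl fun a _ => by
        rw [show ((if r a j = 0 then 1 / ((chZ r j).card : ℝ) else 0) *
            (if a = i then (1:ℝ) else 0)) = (if a = i then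
              (if r a j = 0 then 1 / ((chZ r j).card : ℝ) else 0) else 0) from by
          by_cases h : a = i <;> simp [h]]]
      rw [Finset.sum_ite_eq' univ i (fun a => if r a j = 0 then 1 / ((chZ r j).card : ℝ) else 0)]
      simp
    rw [Finset.sum_congr rfl fun σ _ => this σ, Finset.sum_const, Finset.card_univ,
      nsmul_eq_mul, itemProb, if_pos hj]
    field_simp
    rw [hN]; ring
  · have : ∀ σ : Equiv.Perm (Fin n), ∑ a : Fin n, chF hn w r j i σ j a
        = (if σ ⟨chRank w r j % n, Nat.mod_lt _ hn⟩ = i then (1:ℝ) else 0) := by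
      intro σ
      simp only [chF, if_neg hj, if_pos rfl, if_true]
      rw [Finset.sum_congr rfl fun a _ => by
        rw [show ((if a = σ ⟨chRank w r j % n, Nat.mod_lt _ hn⟩ then (1:ℝ) else 0) *
            (if a = i then (1:ℝ) else 0)) = (if a = i then
              (if a = σ ⟨chRank w r j % n, Nat.mod_lt _ hn⟩ then (1:ℝ) else 0) else 0) from by
          by_cases h : a = i <;> simp [h]]]
      rw [Finset.sum_ite_eq' univ i
        (fun a => if a = σ ⟨chRank w r j % n, Nat.mod_lt _ hn⟩ then (1:ℝ) else 0)]
      simp [eq_comm]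
    rw [Finset.sum_congr rfl fun σ _ => this σ, sum_perm_ind, itemProb, if_neg hj]
    rw [div_div, mul_comm, ← div_div, div_self hNne]

lemma randChoreExp_eq {n m : ℕ} (hn : 0 < n) (w : Fin m → ℝ) (r : Fin n → Fin m → ℝ)
    (vi : Fin m → ℝ) (i : Fin n) :
    randChoreExp hn w r vi i = ∑ j : Fin m, vi j * itemProb r j i := by
  unfold randChoreExp
  have hb : ∀ A : Fin m → Fin n, sval vi (bundle A i)
      = ∑ j : Fin m, vi j * (if A j = i then 1 else 0) := by
    intro A
    rw [sval, bundle, Finset.sum_filter]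
    apply Finset.sum_congr rfl
    intro j _
    by_cases h : A j = i <;> simp [h]
  rw [Finset.sum_congr rfl fun A _ => by rw [hb A, Finset.mul_sum]]
  rw [Finset.sum_comm]
  apply Finset.sum_congr rfl
  intro j _
  rw [← randChore_marginal hn w r j i, Finset.mul_sum]
  apply Finset.sum_congr rfl
  intro A _
  ring

lemma itemProb_nonneg {n m : ℕ} (r : Fin n → Fin m → ℝ) (j : Fin m) (i : Fin n) :
    0 ≤ itemProb r j i := by
  unfold itemProb
  split_ifs <;> positivity

lemma item_ineq {n m : ℕ} (hn : 0 < n) (w : Fin m → ℝ)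
    (v : Fin n → Fin m → ℝ) (r : Fin n → Fin m → ℝ) (S : Finset (Fin n)) (j : Fin m)
    (hwj : w j < 0) (hv : ∀ i, v i j = 0 ∨ v i j = w j) :
    ∑ i ∈ S, v i j * itemProb (fun i' => if i' ∈ S then v i' else r i') j i
      ≥ ∑ i ∈ S, v i j * itemProb r j i := by
  set r' : Fin n → Fin m → ℝ := fun i' => if i' ∈ S then v i' else r i' with hr'
  have hvle : ∀ i, v i j ≤ 0 := by
    intro i; rcases hv i with h | h <;> rw [h]
    exact hwj.le
  have hterm_nonpos : ∀ (rr : Fin n → Fin m → ℝ) (i : Fin n),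
      v i j * itemProb rr j i ≤ 0 := fun rr i =>
    mul_nonpos_of_nonpos_of_nonneg (hvle i) (itemProb_nonneg rr j i)
  by_cases hj' : j ∈ chQ r'
  · have hLHS : ∑ i ∈ S, v i j * itemProb r' j i = 0 := by
      apply Finset.sum_eq_zero
      intro i hi
      rcases hv i with h0 | hwv
      · rw [h0, zero_mul]
      · have hrij : r' i j = w j := by rw [hr']; simp only [if_pos hi]; exact hwv
        have : itemProb r' j i = 0 := by
          rw [itemProb, if_pos hj', if_neg (by rw [hrij]; exact hwj.ne)]
        rw [this, mul_zero]
    rw [hLHS]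
    exact Finset.sum_nonpos fun i _ => hterm_nonpos r i
  · have hall : ∀ i, r' i j ≠ 0 := by
      intro i hi
      exact hj' (by simp only [chQ, mem_filter, mem_univ, true_and]; exact ⟨i, hi⟩)
    have hvS : ∀ i ∈ S, v i j = w j := by
      intro i hi
      rcases hv i with h0 | hwv
      · exact absurd (by rw [hr']; simp only [if_pos hi]; exact h0) (hall i)
      · exact hwv
    have hrO : ∀ i ∉ S, r i j ≠ 0 := by
      intro i hi
      have := hall i
      simp only [hr', if_neg hi] at this
      exact this
    have hcard : ((S.card : ℝ)) ≤ n := by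
      have := Finset.card_le_card (Finset.subset_univ S)
      rw [Finset.card_univ, Fintype.card_fin] at this
      exact_mod_cast this
    have hLHS : ∑ i ∈ S, v i j * itemProb r' j i = (S.card : ℝ) * (w j / n) := by
      rw [Finset.sum_congr rfl fun i hi => by
        rw [hvS i hi, itemProb, if_neg hj', mul_one_div]]
      rw [Finset.sum_const, nsmul_eq_mul]
    rw [hLHS]
    by_cases hjr : j ∈ chQ r
    · have hZS : chZ r j ⊆ S := by
        intro i hi
        simp only [chZ, mem_filter, mem_univ, true_and] at hi
        by_contra hiS
        exact hrO i hiS hi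
      have hZne : (chZ r j).Nonempty := by
        simp only [chQ, mem_filter, mem_univ, true_and] at hjr
        obtain ⟨a, ha⟩ := hjr
        exact ⟨a, by simp [chZ, ha]⟩
      have hcz : (0 : ℝ) < ((chZ r j).card : ℝ) := by
        exact_mod_cast Finset.card_pos.mpr hZne
      have hRHS : ∑ i ∈ S, v i j * itemProb r j i = w j := by
        have hterm : ∀ i ∈ S, v i j * itemProb r j i
            = (if r i j = 0 then w j / ((chZ r j).card : ℝ) else 0) := by
          intro i hi
          rw [hvS i hi, itemProb, if_pos hjr]
          by_cases h : r i j = 0 <;> simp [h, mul_one_div, div_eq_mul_inv]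
        rw [Finset.sum_congr rfl hterm, ← Finset.sum_filter]
        have hfe : S.filter (fun i => r i j = 0) = chZ r j := by
          ext i
          simp only [mem_filter, chZ, mem_univ, true_and]
          constructor
          · exact fun h => h.2
          · intro h
            exact ⟨hZS (by simp [chZ, h]), h⟩
        rw [hfe, Finset.sum_const, nsmul_eq_mul]
        field_simp
      rw [hRHS]
      have h1 : (S.card : ℝ) * (w j / n) ≥ (n : ℝ) * (w j / n) := by
        apply mul_le_mul_of_nonpos_right hcard
        apply div_nonpos_of_nonpos_of_nonneg hwj.le (by positivity)
      calc (S.card : ℝ) * (w j / n) ≥ (n : ℝ) * (w j / n) := h1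
        _ = w j := by field_simp
    · have hRHS : ∑ i ∈ S, v i j * itemProb r j i = (S.card : ℝ) * (w j / n) := by
        rw [Finset.sum_congr rfl fun i hi => by
          rw [hvS i hi, itemProb, if_neg hjr, mul_one_div]]
        rw [Finset.sum_const, nsmul_eq_mul]
      rw [hRHS]

/-- in `RandChore`, for any coalition `S` the total expected utility of `S` is
maximized when every member of `S` reports truthfully (the reports of the other agents,
given by `r` outside `S`, being fixed). -/
theorem randChore_coalition_truthful_maximizes_sum (n m : ℕ) (hn : 0 < n)
    (w : Fin m → ℝ) (hw : ∀ j, w j < 0)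
    (v : Fin n → Fin m → ℝ) (hv : ∀ i j, v i j = 0 ∨ v i j = w j)
    (S : Finset (Fin n))
    (r : Fin n → Fin m → ℝ) (hr : ∀ i j, r i j = 0 ∨ r i j = w j) :
    ∑ i ∈ S, randChoreExp hn w (fun i' => if i' ∈ S then v i' else r i') (v i) i
      ≥ ∑ i ∈ S, randChoreExp hn w r (v i) i := by
  rw [Finset.sum_congr rfl fun i _ => randChoreExp_eq hn w _ (v i) i,
    Finset.sum_congr rfl fun i _ => randChoreExp_eq hn w r (v i) i,
    Finset.sum_comm, Finset.sum_comm (s := S)]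
  apply Finset.sum_le_sum
  intro j _
  exact item_ineq hn w v r S j (hw j) (fun i => hv i j)
end
end

section
/- For every profile (v_1, ..., v_n) of 1-restricted additive chore valuations, the randomized allocation returned by RandChore on this profile (with reports equal to the true valuations) is ex-ante envy-free, ex-ante equitable, and ex-ante proportional, and is ex-post envy-free up to one item, ex-post equitable up to one item, and ex-post proportional up to one item, all with respect to (v_1, ..., v_n). -/
open Finset

attribute [local instance] Classical.propDecidable

noncomputable section

/-- Envy-freeness up to one item. -/
def EF1 {m n : ℕ} (v : Fin n → Fin m → ℝ) (A : Fin m → Fin n) : Prop :=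
  ∀ i j : Fin n, sval (v i) (bundle A i) ≥ sval (v i) (bundle A j) ∨
    ∃ e ∈ bundle A i ∪ bundle A j,
      sval (v i) ((bundle A i).erase e) ≥ sval (v i) ((bundle A j).erase e)

/-- Proportionality up to one item. -/
def PROP1 {m n : ℕ} (v : Fin n → Fin m → ℝ) (A : Fin m → Fin n) : Prop :=
  ∀ i : Fin n, sval (v i) (bundle A i) ≥ (∑ j, v i j) / (n : ℝ) ∨
    (∃ e ∉ bundle A i, sval (v i) (insert e (bundle A i)) ≥ (∑ j, v i j) / (n : ℝ)) ∨
    (∃ e ∈ bundle A i, sval (v i) ((bundle A i).erase e) ≥ (∑ j, v i j) / (n : ℝ))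

section Rank
variable {n m : ℕ} (w : Fin m → ℝ) (r : Fin n → Fin m → ℝ)

lemma rk_lt {q : Fin m} (hq : q ∈ (chQ r)ᶜ) : chRank w r q < ((chQ r)ᶜ).card := by
  have hsub : (((chQ r)ᶜ).filter fun q' => w q' > w q ∨ (w q' = w q ∧ q' < q)) ⊆
      ((chQ r)ᶜ).erase q := by
    intro x hx
    rw [Finset.mem_filter] at hx
    refine Finset.mem_erase.2 ⟨?_, hx.1⟩
    rintro rfl
    rcases hx.2 with h | ⟨_, h⟩ <;> exact absurd h (by simp)
  calc chRank w r q ≤ (((chQ r)ᶜ).erase q).card := Finset.card_le_card hsub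
    _ < ((chQ r)ᶜ).card := Finset.card_erase_lt_of_mem hq

lemma rk_strict {q1 q2 : Fin m} (h1 : q1 ∈ (chQ r)ᶜ)
    (hp : w q1 > w q2 ∨ (w q1 = w q2 ∧ q1 < q2)) : chRank w r q1 < chRank w r q2 := by
  apply Finset.card_lt_card
  constructor
  · intro x hx
    rw [Finset.mem_filter] at hx ⊢
    refine ⟨hx.1, ?_⟩
    rcases hx.2 with h | ⟨he, hl⟩ <;> rcases hp with h' | ⟨he', hl'⟩
    · exact Or.inl (lt_trans h' h)
    · exact Or.inl (he' ▸ h)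
    · exact Or.inl (he ▸ h')
    · exact Or.inr ⟨he.trans he', hl.trans hl'⟩
  · intro hsub
    have : q1 ∈ ((chQ r)ᶜ).filter fun q' => w q' > w q2 ∨ (w q' = w q2 ∧ q' < q2) :=
      Finset.mem_filter.2 ⟨h1, hp⟩
    have h2 := hsub this
    rw [Finset.mem_filter] at h2
    rcases h2.2 with h | ⟨_, h⟩ <;> exact absurd h (by simp)

lemma rk_inj {q1 q2 : Fin m} (h1 : q1 ∈ (chQ r)ᶜ) (h2 : q2 ∈ (chQ r)ᶜ)
    (h : chRank w r q1 = chRank w r q2) : q1 = q2 := by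
  by_contra hne
  rcases lt_trichotomy (w q1) (w q2) with hw | hw | hw
  · exact absurd h (Nat.ne_of_gt (rk_strict w r h2 (Or.inl hw)))
  · rcases lt_or_gt_of_ne (show q1 ≠ q2 from hne) with hl | hl
    · exact absurd h (Nat.ne_of_lt (rk_strict w r h1 (Or.inr ⟨hw, hl⟩)))
    · exact absurd h (Nat.ne_of_gt (rk_strict w r h2 (Or.inr ⟨hw.symm, hl⟩)))
  · exact absurd h (Nat.ne_of_lt (rk_strict w r h1 (Or.inl hw)))

lemma rk_w_mono {q1 q2 : Fin m} (h2 : q2 ∈ (chQ r)ᶜ)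
    (h : chRank w r q1 ≤ chRank w r q2) : w q2 ≤ w q1 := by
  by_contra hlt
  push_neg at hlt
  exact absurd h (not_le.2 (rk_strict w r h2 (Or.inl hlt)))

lemma rk_surj {p : ℕ} (hp : p < ((chQ r)ᶜ).card) :
    ∃ q ∈ (chQ r)ᶜ, chRank w r q = p := by
  have himg : ((chQ r)ᶜ).image (chRank w r) = Finset.range ((chQ r)ᶜ).card := by
    apply Finset.eq_of_subset_of_card_le
    · intro x hx
      rw [Finset.mem_image] at hx
      obtain ⟨q, hq, rfl⟩ := hx
      exact Finset.mem_range.2 (rk_lt w r hq)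
    · rw [Finset.card_range, Finset.card_image_of_injOn]
      intro a ha b hb hab
      exact rk_inj w r ha hb hab
  have : p ∈ ((chQ r)ᶜ).image (chRank w r) := himg ▸ Finset.mem_range.2 hp
  rw [Finset.mem_image] at this
  obtain ⟨q, hq, hrk⟩ := this
  exact ⟨q, hq, hrk⟩

end Rank

lemma mod_step {n p pm t : ℕ} (hp : p % n = t) (hm : pm % n = t) (hlt : p < pm) :
    p + n ≤ pm := by
  have h1 := Nat.div_add_mod p n
  have h2 := Nat.div_add_mod pm n
  have hd : p / n < pm / n := by
    by_contra hc
    push_neg at hc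
    have := Nat.mul_le_mul_left n hc
    omega
  have h3 : n * (p / n + 1) ≤ n * (pm / n) := Nat.mul_le_mul_left n hd
  have hmul : n * (p / n + 1) = n * (p / n) + n := by ring
  omega

section Key
variable {n m : ℕ} (w : Fin m → ℝ) (r : Fin n → Fin m → ℝ)

lemma key (hn : 0 < n) (hw : ∀ j, w j < 0)
    (item : ℕ → Fin m)
    (hitem : ∀ p, p < ((chQ r)ᶜ).card → item p ∈ (chQ r)ᶜ ∧ chRank w r (item p) = p)
    {t : ℕ} (ht : t < n)
    (hne : (((chQ r)ᶜ).filter (fun q => chRank w r q % n = t)).Nonempty) :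
    ∃ e ∈ ((chQ r)ᶜ).filter (fun q => chRank w r q % n = t),
      ∀ t', t' < n →
        ∑ q ∈ (((chQ r)ᶜ).filter (fun q => chRank w r q % n = t)).erase e, w q ≥
        ∑ q ∈ ((chQ r)ᶜ).filter (fun q => chRank w r q % n = t'), w q := by
  set M := ((chQ r)ᶜ).card with hM
  have hTeq : ∀ s : ℕ, ((chQ r)ᶜ).filter (fun q => chRank w r q % n = s)
      = ((Finset.range M).filter (fun p => p % n = s)).image item := by
    intro s; ext q
    simp only [Finset.mem_filter, Finset.mem_image, Finset.mem_range]
    constructor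
    · rintro ⟨hq, hs⟩
      exact ⟨chRank w r q, ⟨rk_lt w r hq, hs⟩,
        rk_inj w r (hitem _ (rk_lt w r hq)).1 hq (hitem _ (rk_lt w r hq)).2⟩
    · rintro ⟨p, ⟨hpM, hps⟩, rfl⟩
      exact ⟨(hitem p hpM).1, by rw [(hitem p hpM).2]; exact hps⟩
  have hinjM : ∀ p1 ∈ Finset.range M, ∀ p2 ∈ Finset.range M, item p1 = item p2 → p1 = p2 := by
    intro p1 h1 p2 h2 he
    rw [Finset.mem_range] at h1 h2
    rw [← (hitem p1 h1).2, ← (hitem p2 h2).2, he]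
  have hsumT : ∀ s : ℕ, ∑ q ∈ ((chQ r)ᶜ).filter (fun q => chRank w r q % n = s), w q
      = ∑ p ∈ (Finset.range M).filter (fun p => p % n = s), w (item p) := by
    intro s; rw [hTeq s, Finset.sum_image]
    intro p1 h1 p2 h2 he
    exact hinjM p1 (Finset.mem_of_mem_filter _ h1) p2 (Finset.mem_of_mem_filter _ h2) he
  have hPne : ((Finset.range M).filter (fun p => p % n = t)).Nonempty := by
    rw [hTeq t] at hne
    exact Finset.image_nonempty.mp hne
  set pmax := ((Finset.range M).filter (fun p => p % n = t)).max' hPne with hpm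
  have hpmax_mem : pmax ∈ (Finset.range M).filter (fun p => p % n = t) :=
    Finset.max'_mem _ hPne
  have hpmaxM : pmax < M := Finset.mem_range.1 (Finset.mem_of_mem_filter _ hpmax_mem)
  have hpmaxt : pmax % n = t := (Finset.mem_filter.1 hpmax_mem).2
  refine ⟨item pmax, by rw [hTeq t]; exact Finset.mem_image_of_mem _ hpmax_mem, ?_⟩
  intro t' ht'
  set c := if t ≤ t' then t' - t else n + t' - t with hcdef
  have hc : c < n := by rw [hcdef]; split <;> omega
  have hct : (t + c) % n = t' := by
    rw [hcdef]; split
    · rw [show t + (t' - t) = t' by omega]; exact Nat.mod_eq_of_lt ht'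
    · rw [show t + (n + t' - t) = n + t' by omega, Nat.add_mod_left]
      exact Nat.mod_eq_of_lt ht'
  have hmem : ∀ p ∈ ((Finset.range M).filter (fun p => p % n = t)).erase pmax,
      p + c ∈ (Finset.range M).filter (fun p => p % n = t') := by
    intro p hp
    obtain ⟨hpne, hpf⟩ := Finset.mem_erase.1 hp
    obtain ⟨hpM, hpt⟩ := Finset.mem_filter.1 hpf
    rw [Finset.mem_range] at hpM
    have hplt : p < pmax := lt_of_le_of_ne (Finset.le_max' _ _ hpf) hpne
    have hstep : p + n ≤ pmax := mod_step hpt hpmaxt hplt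
    refine Finset.mem_filter.2 ⟨Finset.mem_range.2 (by omega), ?_⟩
    have : (p + c) % n = (p % n + c % n) % n := Nat.add_mod p c n
    rw [this, hpt, Nat.mod_eq_of_lt hc, hct]
  -- main chain
  set E := ((Finset.range M).filter (fun p => p % n = t)).erase pmax with hE
  have hEsub : E ⊆ Finset.range M := fun p hp =>
    Finset.mem_of_mem_filter _ (Finset.mem_of_mem_erase hp)
  have himgsub : E.image (· + c) ⊆ (Finset.range M).filter (fun p => p % n = t') := by
    intro x hx
    obtain ⟨p, hp, rfl⟩ := Finset.mem_image.1 hx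
    exact hmem p hp
  have hinj2 : ∀ p1 ∈ E, ∀ p2 ∈ E, p1 + c = p2 + c → p1 = p2 := by
    intro p1 _ p2 _ h; omega
  have step1 : ∑ p ∈ (Finset.range M).filter (fun p => p % n = t'), w (item p)
      ≤ ∑ p ∈ E.image (· + c), w (item p) := by
    rw [← Finset.sum_sdiff himgsub]
    have : ∑ p ∈ ((Finset.range M).filter (fun p => p % n = t')) \ E.image (· + c),
        w (item p) ≤ 0 :=
      Finset.sum_nonpos fun p _ => (hw (item p)).le
    linarith
  have step2 : ∑ p ∈ E.image (· + c), w (item p) = ∑ p ∈ E, w (item (p + c)) :=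
    Finset.sum_image hinj2
  have step3 : ∑ p ∈ E, w (item (p + c)) ≤ ∑ p ∈ E, w (item p) := by
    apply Finset.sum_le_sum
    intro p hp
    have hpM : p < M := Finset.mem_range.1 (hEsub hp)
    have hpcM : p + c < M := Finset.mem_range.1 (Finset.mem_of_mem_filter _ (hmem p hp))
    apply rk_w_mono w r (hitem _ hpcM).1
    rw [(hitem _ hpM).2, (hitem _ hpcM).2]
    omega
  have herase : ∑ q ∈ (((chQ r)ᶜ).filter (fun q => chRank w r q % n = t)).erase (item pmax), w q
      = ∑ p ∈ E, w (item p) := by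
    have h1 : item pmax ∈ ((chQ r)ᶜ).filter (fun q => chRank w r q % n = t) := by
      rw [hTeq t]; exact Finset.mem_image_of_mem _ hpmax_mem
    rw [Finset.sum_erase_eq_sub h1, Finset.sum_erase_eq_sub hpmax_mem, hsumT t]
  rw [herase, hsumT t', ge_iff_le]
  calc ∑ p ∈ (Finset.range M).filter (fun p => p % n = t'), w (item p)
      ≤ ∑ p ∈ E.image (· + c), w (item p) := step1
    _ = ∑ p ∈ E, w (item (p + c)) := step2
    _ ≤ ∑ p ∈ E, w (item p) := step3

end Key

section Expost
variable {n m : ℕ}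

lemma expost (hn : 0 < n) (w : Fin m → ℝ) (v : Fin n → Fin m → ℝ)
    (hw : ∀ j, w j < 0) (hv : ∀ i j, v i j = 0 ∨ v i j = w j)
    (A : Fin m → Fin n) (σ : Equiv.Perm (Fin n))
    (hσ : ∀ q ∈ (chQ v)ᶜ, A q = σ ⟨chRank w v q % n, Nat.mod_lt _ hn⟩)
    (hQ0 : ∀ q ∈ chQ v, v (A q) q = 0) :
    EF1 v A ∧ EQ1 v A ∧ PROP1 v A := by
  have hvle : ∀ i q, v i q ≤ 0 := fun i q =>
    (hv i q).elim le_of_eq (fun h => h ▸ (hw q).le)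
  have hvQb : ∀ (i : Fin n) (q : Fin m), q ∈ (chQ v)ᶜ → v i q = w q := by
    intro i q hq
    rcases hv i q with h | h
    · exfalso
      rw [Finset.mem_compl, chQ, Finset.mem_filter] at hq
      exact hq ⟨Finset.mem_univ q, i, h⟩
    · exact h
  set T : ℕ → Finset (Fin m) :=
    fun s => ((chQ v)ᶜ).filter (fun q => chRank w v q % n = s) with hT
  have hbk : ∀ k : Fin n, (bundle A k).filter (fun q => q ∉ chQ v)
      = T (((σ.symm k : Fin n) : ℕ)) := by
    intro k; ext q
    simp only [hT, bundle, Finset.mem_filter, Finset.mem_univ, true_and, Finset.mem_compl]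
    constructor
    · rintro ⟨hA, hq⟩
      have hq' : q ∈ (chQ v)ᶜ := Finset.mem_compl.2 hq
      refine ⟨hq, ?_⟩
      have h2 := hσ q hq'
      rw [hA] at h2
      have : σ.symm k = ⟨chRank w v q % n, Nat.mod_lt _ hn⟩ := by
        rw [h2]; exact (Equiv.symm_apply_apply σ _)
      rw [this]
    · rintro ⟨hq, hrk⟩
      have hq' : q ∈ (chQ v)ᶜ := Finset.mem_compl.2 hq
      refine ⟨?_, hq⟩
      rw [hσ q hq']
      have : (⟨chRank w v q % n, Nat.mod_lt _ hn⟩ : Fin n) = σ.symm k := by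
        apply Fin.ext; exact hrk
      rw [this, Equiv.apply_symm_apply]
  have hown : ∀ k : Fin n, sval (v k) (bundle A k) = ∑ q ∈ T (((σ.symm k : Fin n) : ℕ)), w q := by
    intro k
    rw [sval, ← Finset.sum_filter_add_sum_filter_not (bundle A k) (fun q => q ∈ chQ v)]
    have h1 : ∑ q ∈ (bundle A k).filter (fun q => q ∈ chQ v), v k q = 0 := by
      apply Finset.sum_eq_zero
      intro q hq
      rw [Finset.mem_filter, bundle, Finset.mem_filter] at hq
      have := hQ0 q hq.2
      rwa [hq.1.2] at this
    rw [h1, zero_add, hbk k]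
    apply Finset.sum_congr rfl
    intro q hq
    exact hvQb k q (Finset.mem_of_mem_filter _ hq)
  have hother : ∀ i k : Fin n, sval (v i) (bundle A k) ≤
      ∑ q ∈ T (((σ.symm k : Fin n) : ℕ)), w q := by
    intro i k
    rw [sval, ← Finset.sum_filter_add_sum_filter_not (bundle A k) (fun q => q ∈ chQ v)]
    have h1 : ∑ q ∈ (bundle A k).filter (fun q => q ∈ chQ v), v i q ≤ 0 :=
      Finset.sum_nonpos fun q _ => hvle i q
    have h2 : ∑ q ∈ (bundle A k).filter (fun q => q ∉ chQ v), v i q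
        = ∑ q ∈ T (((σ.symm k : Fin n) : ℕ)), w q := by
      rw [hbk k]
      exact Finset.sum_congr rfl fun q hq => hvQb i q (Finset.mem_of_mem_filter _ hq)
    linarith
  have hTsub : ∀ (k : Fin n) q, q ∈ T (((σ.symm k : Fin n) : ℕ)) → q ∈ bundle A k := by
    intro k q hq
    have := (hbk k) ▸ hq
    exact Finset.mem_of_mem_filter _ this
  have hkey : ∀ t : ℕ, t < n → (T t).Nonempty →
      ∃ e ∈ T t, ∀ t', t' < n →
        ∑ q ∈ (T t).erase e, w q ≥ ∑ q ∈ T t', w q := by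
    intro t ht hne
    obtain ⟨q0, hq0⟩ := hne
    have hq0b : q0 ∈ (chQ v)ᶜ := Finset.mem_of_mem_filter _ hq0
    have hex : ∀ p : ℕ, ∃ q : Fin m,
        p < ((chQ v)ᶜ).card → q ∈ (chQ v)ᶜ ∧ chRank w v q = p := by
      intro p
      by_cases hp : p < ((chQ v)ᶜ).card
      · obtain ⟨q, hq, hr⟩ := rk_surj w v hp
        exact ⟨q, fun _ => ⟨hq, hr⟩⟩
      · exact ⟨q0, fun h => absurd h hp⟩
    choose item hitem using hex
    exact key w v hn hw item hitem ht ⟨q0, hq0⟩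
  have hsvalerase : ∀ (i : Fin n) (e : Fin m), e ∈ T (((σ.symm i : Fin n) : ℕ)) →
      sval (v i) ((bundle A i).erase e) = ∑ q ∈ (T (((σ.symm i : Fin n) : ℕ))).erase e, w q := by
    intro i e he
    rw [sval, Finset.sum_erase_eq_sub (hTsub i e he),
      Finset.sum_erase_eq_sub he, ← sval, hown i,
      hvQb i e (Finset.mem_of_mem_filter _ he)]
  have hebk : ∀ (i k : Fin n) (e : Fin m), i ≠ k → e ∈ bundle A i →
      (bundle A k).erase e = bundle A k := by
    intro i k e hik he
    apply Finset.erase_eq_of_notMem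
    rw [bundle, Finset.mem_filter] at he ⊢
    rintro ⟨_, hk⟩
    exact hik (he.2 ▸ hk ▸ rfl)
  refine ⟨?_, ?_, ?_⟩
  · -- EF1
    intro i k
    by_cases hik : i = k
    · subst hik; left; exact le_refl _
    rcases Finset.eq_empty_or_nonempty (T (((σ.symm i : Fin n) : ℕ))) with hemp | hne
    · left
      rw [hown i, hemp, Finset.sum_empty]
      exact Finset.sum_nonpos fun q _ => hvle i q
    · obtain ⟨e, heT, hke⟩ := hkey _ (σ.symm i).isLt hne
      have heb : e ∈ bundle A i := hTsub i e heT
      right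
      refine ⟨e, Finset.mem_union_left _ heb, ?_⟩
      rw [hebk i k e hik heb, hsvalerase i e heT]
      exact le_trans (hother i k) (hke _ (σ.symm k).isLt)
  · -- EQ1
    intro i k
    by_cases hik : i = k
    · subst hik; left; exact le_refl _
    rcases Finset.eq_empty_or_nonempty (T (((σ.symm i : Fin n) : ℕ))) with hemp | hne
    · left
      rw [hown i, hown k, hemp, Finset.sum_empty]
      exact Finset.sum_nonpos fun q hq => (hw q).le
    · obtain ⟨e, heT, hke⟩ := hkey _ (σ.symm i).isLt hne
      have heb : e ∈ bundle A i := hTsub i e heT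
      right
      refine ⟨e, Finset.mem_union_left _ heb, ?_⟩
      have : sval (v k) ((bundle A k).erase e) = sval (v k) (bundle A k) := by
        rw [hebk i k e hik heb]
      rw [this, hsvalerase i e heT, hown k]
      exact hke _ (σ.symm k).isLt
  · -- PROP1
    intro i
    have hsum_le : ∑ j, v i j ≤ ∑ q ∈ (chQ v)ᶜ, w q := by
      rw [← Finset.sum_add_sum_compl (chQ v) (v i)]
      have h1 : ∑ q ∈ chQ v, v i q ≤ 0 := Finset.sum_nonpos fun q _ => hvle i q
      have h2 : ∑ q ∈ (chQ v)ᶜ, v i q = ∑ q ∈ (chQ v)ᶜ, w q :=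
        Finset.sum_congr rfl fun q hq => hvQb i q hq
      linarith
    rcases Finset.eq_empty_or_nonempty (T (((σ.symm i : Fin n) : ℕ))) with hemp | hne
    · left
      rw [hown i, hemp, Finset.sum_empty]
      apply div_nonpos_of_nonpos_of_nonneg
      · exact Finset.sum_nonpos fun q _ => hvle i q
      · exact Nat.cast_nonneg n
    · obtain ⟨e, heT, hke⟩ := hkey _ (σ.symm i).isLt hne
      have heb : e ∈ bundle A i := hTsub i e heT
      right; right
      refine ⟨e, heb, ?_⟩
      rw [hsvalerase i e heT]
      set S := ∑ q ∈ (T (((σ.symm i : Fin n) : ℕ))).erase e, w q with hS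
      have hfib : ∑ t' ∈ Finset.range n, ∑ q ∈ T t', w q = ∑ q ∈ (chQ v)ᶜ, w q := by
        apply Finset.sum_fiberwise_of_maps_to
        intro q _
        exact Finset.mem_range.2 (Nat.mod_lt _ hn)
      have hge : ∑ q ∈ (chQ v)ᶜ, w q ≤ n * S := by
        rw [← hfib]
        calc ∑ t' ∈ Finset.range n, ∑ q ∈ T t', w q
            ≤ ∑ _t' ∈ Finset.range n, S :=
              Finset.sum_le_sum fun t' ht' => hke t' (Finset.mem_range.1 ht')
          _ = n * S := by rw [Finset.sum_const, Finset.card_range, nsmul_eq_mul]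
      rw [ge_iff_le, div_le_iff₀ (by exact_mod_cast hn)]
      calc ∑ j, v i j ≤ ∑ q ∈ (chQ v)ᶜ, w q := hsum_le
        _ ≤ n * S := hge
        _ = S * n := mul_comm _ _

end Expost

lemma perm_count {n : ℕ} (x i : Fin n) :
    (n : ℝ) * (∑ σ : Equiv.Perm (Fin n), if σ x = i then (1:ℝ) else 0)
      = (Fintype.card (Equiv.Perm (Fin n)) : ℝ) := by
  have hconst : ∀ j : Fin n, (∑ σ : Equiv.Perm (Fin n), if σ x = j then (1:ℝ) else 0)
      = ∑ σ : Equiv.Perm (Fin n), if σ x = i then (1:ℝ) else 0 := by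
    intro j
    apply Fintype.sum_equiv (Equiv.mulLeft (Equiv.swap j i))
    intro σ
    simp only [Equiv.coe_mulLeft, Equiv.Perm.mul_apply]
    show (if σ x = j then (1:ℝ) else 0) = if (Equiv.swap j i) (σ x) = i then (1:ℝ) else 0
    by_cases h : σ x = j
    · rw [if_pos h, if_pos (by rw [h, Equiv.swap_apply_left])]
    · rw [if_neg h, if_neg ?_]
      intro hc
      apply h
      have := (Equiv.swap j i).injective (a₁ := σ x) (a₂ := j)
      apply this
      rw [hc, Equiv.swap_apply_left]
  have htot : ∑ j : Fin n, (∑ σ : Equiv.Perm (Fin n), if σ x = j then (1:ℝ) else 0)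
      = (Fintype.card (Equiv.Perm (Fin n)) : ℝ) := by
    rw [Finset.sum_comm]
    have : ∀ σ : Equiv.Perm (Fin n), (∑ j : Fin n, if σ x = j then (1:ℝ) else 0) = 1 := by
      intro σ
      rw [Finset.sum_ite_eq]
      simp
    rw [Finset.sum_congr rfl fun σ _ => this σ, Finset.sum_const, Finset.card_univ,
      nsmul_eq_mul, mul_one]
  rw [← htot, Finset.sum_congr rfl fun j _ => hconst j]
  simp [mul_comm]

section Frac
variable {n m : ℕ}

lemma frac_Qb (hn : 0 < n) (w : Fin m → ℝ) (v : Fin n → Fin m → ℝ)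
    {q0 : Fin m} (hq0 : q0 ∈ (chQ v)ᶜ) (i : Fin n) :
    implFrac (randChoreProb hn w v) q0 i = 1 / n := by
  classical
  set N := (Fintype.card (Equiv.Perm (Fin n)) : ℝ) with hN
  have hNpos : (0:ℝ) < N := by
    rw [hN]
    exact_mod_cast Fintype.card_pos
  set G : Equiv.Perm (Fin n) → Fin m → Fin n → ℝ := fun σ q a =>
    if q ∈ chQ v then (if v a q = 0 then 1/((chZ v q).card : ℝ) else 0)
    else (if a = σ ⟨chRank w v q % n, Nat.mod_lt _ hn⟩ then 1 else 0) *
         (if q = q0 then (if a = i then (1:ℝ) else 0) else 1) with hG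
  have hGA : ∀ (σ : Equiv.Perm (Fin n)) (A : Fin m → Fin n),
      (if ∀ q ∈ (chQ v)ᶜ, A q = σ ⟨chRank w v q % n, Nat.mod_lt _ hn⟩ then (1:ℝ) else 0)
      * ((∏ q ∈ chQ v, (if v (A q) q = 0 then (1:ℝ)/((chZ v q).card:ℝ) else 0))
      * (if A q0 = i then (1:ℝ) else 0))
      = ∏ q : Fin m, G σ q (A q) := by
    intro σ A
    rw [← Finset.prod_mul_prod_compl (chQ v) (fun q => G σ q (A q))]
    have h1 : ∏ q ∈ chQ v, G σ q (A q)
        = ∏ q ∈ chQ v, (if v (A q) q = 0 then (1:ℝ)/((chZ v q).card:ℝ) else 0) :=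
      Finset.prod_congr rfl fun q hq => by simp only [hG, if_pos hq]
    have h2 : ∏ q ∈ (chQ v)ᶜ, G σ q (A q)
        = (if ∀ q ∈ (chQ v)ᶜ, A q = σ ⟨chRank w v q % n, Nat.mod_lt _ hn⟩ then (1:ℝ) else 0)
          * (if A q0 = i then (1:ℝ) else 0) := by
      have hco : ∀ q ∈ (chQ v)ᶜ, G σ q (A q)
          = (if A q = σ ⟨chRank w v q % n, Nat.mod_lt _ hn⟩ then (1:ℝ) else 0) *
            (if q = q0 then (if A q = i then (1:ℝ) else 0) else 1) := by
        intro q hq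
        simp only [hG, if_neg (Finset.mem_compl.1 hq)]
      have hpt : ∀ q ∈ (chQ v)ᶜ, (if q = q0 then (if A q = i then (1:ℝ) else 0) else 1)
          = (if q = q0 then (if A q0 = i then (1:ℝ) else 0) else 1) := by
        intro q _
        by_cases h : q = q0
        · subst h; rfl
        · rw [if_neg h, if_neg h]
      rw [Finset.prod_congr rfl hco, Finset.prod_mul_distrib,
        Finset.prod_congr rfl hpt,
        Finset.prod_ite_eq' ((chQ v)ᶜ) q0 (fun _ => if A q0 = i then (1:ℝ) else 0),
        if_pos hq0, Finset.prod_boole]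
      by_cases h : ∀ q ∈ (chQ v)ᶜ, A q = σ ⟨chRank w v q % n, Nat.mod_lt _ hn⟩
      · rw [if_pos h, if_pos h]
      · rw [if_neg h, if_neg h]
    rw [h1, h2]
    ring
  have hZcard : ∀ q ∈ chQ v, ((chZ v q).card : ℝ) ≠ 0 := by
    intro q hq
    rw [chQ, Finset.mem_filter] at hq
    obtain ⟨_, a, ha⟩ := hq
    have : a ∈ chZ v q := by rw [chZ, Finset.mem_filter]; exact ⟨Finset.mem_univ a, ha⟩
    have hpos : 0 < (chZ v q).card := Finset.card_pos.2 ⟨a, this⟩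
    exact_mod_cast hpos.ne'
  have hsum : ∀ (σ : Equiv.Perm (Fin n)) (q : Fin m), (∑ a : Fin n, G σ q a)
      = if q = q0 then (if σ ⟨chRank w v q0 % n, Nat.mod_lt _ hn⟩ = i then (1:ℝ) else 0)
        else 1 := by
    intro σ q
    by_cases hq : q ∈ chQ v
    · have hne : q ≠ q0 := by
        rintro rfl
        exact (Finset.mem_compl.1 hq0) hq
      rw [if_neg hne]
      have : ∀ a : Fin n, G σ q a = if v a q = 0 then 1/((chZ v q).card : ℝ) else 0 :=
        fun a => by simp only [hG, if_pos hq]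
      rw [Finset.sum_congr rfl fun a _ => this a, ← Finset.sum_filter]
      have : (Finset.univ.filter fun a : Fin n => v a q = 0) = chZ v q := rfl
      rw [this, Finset.sum_const, nsmul_eq_mul, mul_one_div, div_self (hZcard q hq)]
    · by_cases hqq : q = q0
      · subst hqq
        rw [if_pos rfl]
        have : ∀ a : Fin n, G σ q a
            = if a = σ ⟨chRank w v q % n, Nat.mod_lt _ hn⟩ then
                (if a = i then (1:ℝ) else 0) else 0 := by
          intro a
          simp only [hG, if_neg hq, if_pos rfl, eq_self_iff_true, if_true]
          by_cases h : a = σ ⟨chRank w v q % n, Nat.mod_lt _ hn⟩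
          · rw [if_pos h, if_pos h, one_mul]
          · rw [if_neg h, if_neg h, zero_mul]
        rw [Finset.sum_congr rfl fun a _ => this a,
          Finset.sum_ite_eq' Finset.univ (σ ⟨chRank w v q % n, Nat.mod_lt _ hn⟩)
            (fun a => if a = i then (1:ℝ) else 0), if_pos (Finset.mem_univ _)]
      · rw [if_neg hqq]
        have : ∀ a : Fin n, G σ q a
            = if a = σ ⟨chRank w v q % n, Nat.mod_lt _ hn⟩ then (1:ℝ) else 0 := by
          intro a
          simp only [hG, if_neg hq, if_neg hqq, mul_one]
        rw [Finset.sum_congr rfl fun a _ => this a,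
          Finset.sum_ite_eq' Finset.univ (σ ⟨chRank w v q % n, Nat.mod_lt _ hn⟩)
            (fun _ => (1:ℝ)), if_pos (Finset.mem_univ _)]
  have hprod : ∀ σ : Equiv.Perm (Fin n), (∏ q : Fin m, ∑ a : Fin n, G σ q a)
      = if σ ⟨chRank w v q0 % n, Nat.mod_lt _ hn⟩ = i then (1:ℝ) else 0 := by
    intro σ
    rw [Finset.prod_congr rfl fun q _ => hsum σ q, Finset.prod_ite_eq' Finset.univ q0
      (fun _ => if σ ⟨chRank w v q0 % n, Nat.mod_lt _ hn⟩ = i then (1:ℝ) else 0),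
      if_pos (Finset.mem_univ _)]
  have hfact : ∀ σ : Equiv.Perm (Fin n), (∑ A : Fin m → Fin n, ∏ q : Fin m, G σ q (A q))
      = ∏ q : Fin m, ∑ a : Fin n, G σ q a := fun σ => (Fintype.prod_sum (fun q a => G σ q a)).symm
  have hpt : ∀ A : Fin m → Fin n, randChoreProb hn w v A * (if A q0 = i then (1:ℝ) else 0)
      = ∑ σ : Equiv.Perm (Fin n), (1/N) * ∏ q : Fin m, G σ q (A q) := by
    intro A
    rw [← Finset.mul_sum, Finset.sum_congr rfl fun σ _ => (hGA σ A).symm, ← Finset.sum_mul,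
      randChoreProb]
    ring
  have hinner : ∀ σ : Equiv.Perm (Fin n),
      (∑ A : Fin m → Fin n, (1/N) * ∏ q : Fin m, G σ q (A q))
      = (1/N) * (if σ ⟨chRank w v q0 % n, Nat.mod_lt _ hn⟩ = i then (1:ℝ) else 0) := by
    intro σ
    rw [← Finset.mul_sum, hfact σ, hprod σ]
  have hstep : implFrac (randChoreProb hn w v) q0 i
      = (1/N) * ∑ σ : Equiv.Perm (Fin n),
          (if σ ⟨chRank w v q0 % n, Nat.mod_lt _ hn⟩ = i then (1:ℝ) else 0) := by
    rw [implFrac, Finset.sum_congr rfl fun A _ => hpt A, Finset.sum_comm,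
      Finset.sum_congr rfl fun σ _ => hinner σ, ← Finset.mul_sum]
  set c : ℝ := ∑ σ : Equiv.Perm (Fin n),
      (if σ ⟨chRank w v q0 % n, Nat.mod_lt _ hn⟩ = i then (1:ℝ) else 0) with hcc
  have hpc : (n : ℝ) * c = N := by
    rw [hcc, hN]
    exact perm_count _ i
  have hn' : (n:ℝ) ≠ 0 := by exact_mod_cast hn.ne'
  rw [hstep, one_div, inv_mul_eq_div, div_eq_div_iff hNpos.ne' (by exact_mod_cast hn.ne' : (n:ℝ) ≠ 0)]
  linarith

lemma prob_nonneg (hn : 0 < n) (w : Fin m → ℝ) (v : Fin n → Fin m → ℝ)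
    (A : Fin m → Fin n) : 0 ≤ randChoreProb hn w v A := by
  apply mul_nonneg
  · apply div_nonneg
    · apply Finset.sum_nonneg
      intro σ _
      split <;> norm_num
    · exact Nat.cast_nonneg _
  · apply Finset.prod_nonneg
    intro q _
    split
    · positivity
    · exact le_refl 0
lemma frac_zero (hn : 0 < n) (w : Fin m → ℝ) (v : Fin n → Fin m → ℝ)
    {q0 : Fin m} (hq0 : q0 ∈ chQ v) {i : Fin n} (hvi : v i q0 ≠ 0) :
    implFrac (randChoreProb hn w v) q0 i = 0 := by
  rw [implFrac]
  apply Finset.sum_eq_zero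
  intro A _
  by_cases h : A q0 = i
  · have : randChoreProb hn w v A = 0 := by
      rw [randChoreProb]
      apply mul_eq_zero_of_right
      apply Finset.prod_eq_zero hq0
      rw [h, if_neg hvi]
    rw [this, zero_mul]
  · rw [if_neg h, mul_zero]

lemma pos_extract (hn : 0 < n) (w : Fin m → ℝ) (v : Fin n → Fin m → ℝ)
    (A : Fin m → Fin n) (hA : 0 < randChoreProb hn w v A) :
    (∃ σ : Equiv.Perm (Fin n),
        ∀ q ∈ (chQ v)ᶜ, A q = σ ⟨chRank w v q % n, Nat.mod_lt _ hn⟩) ∧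
      ∀ q ∈ chQ v, v (A q) q = 0 := by
  rw [randChoreProb] at hA
  constructor
  · by_contra hc
    push_neg at hc
    have : (∑ σ : Equiv.Perm (Fin n),
        if ∀ q ∈ (chQ v)ᶜ, A q = σ ⟨chRank w v q % n, Nat.mod_lt _ hn⟩ then (1:ℝ) else 0)
        = 0 := by
      apply Finset.sum_eq_zero
      intro σ _
      rw [if_neg]
      intro hall
      obtain ⟨q, hq, hne⟩ := hc σ
      exact hne (hall q hq)
    rw [this, zero_div, zero_mul] at hA
    exact lt_irrefl 0 hA
  · intro q hq
    by_contra hne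
    have : (∏ q ∈ chQ v, (if v (A q) q = 0 then (1:ℝ) / ((chZ v q).card : ℝ) else 0)) = 0 :=
      Finset.prod_eq_zero hq (if_neg hne)
    rw [this, mul_zero] at hA
    exact lt_irrefl 0 hA

end Frac

/-- on any truthful 1-restricted additive chores profile, `RandChore` is
ex-ante EF, EQ and PROP, and ex-post EF1, EQ1 and PROP1. -/
theorem randChore_BoBW_fairness (n m : ℕ) (hn : 0 < n)
    (w : Fin m → ℝ) (hw : ∀ j, w j < 0)
    (v : Fin n → Fin m → ℝ) (hv : ∀ i j, v i j = 0 ∨ v i j = w j) :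
    -- ex-ante envy-freeness
    (∀ i k : Fin n, fval (v i) (implFrac (randChoreProb hn w v)) i ≥
        fval (v i) (implFrac (randChoreProb hn w v)) k) ∧
    -- ex-ante equitability
    (∀ i k : Fin n, fval (v i) (implFrac (randChoreProb hn w v)) i =
        fval (v k) (implFrac (randChoreProb hn w v)) k) ∧
    -- ex-ante proportionality
    (∀ i : Fin n, fval (v i) (implFrac (randChoreProb hn w v)) i ≥ (∑ j, v i j) / (n : ℝ)) ∧
    -- ex-post EF1, EQ1, PROP1
    (∀ A : Fin m → Fin n, 0 < randChoreProb hn w v A → EF1 v A ∧ EQ1 v A ∧ PROP1 v A) := by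
  have hn' : (0:ℝ) < n := by exact_mod_cast hn
  have hvle : ∀ i q, v i q ≤ 0 := fun i q =>
    (hv i q).elim le_of_eq (fun h => h ▸ (hw q).le)
  have hvQb : ∀ (i : Fin n) (q : Fin m), q ∈ (chQ v)ᶜ → v i q = w q := by
    intro i q hq
    rcases hv i q with h | h
    · exfalso
      rw [Finset.mem_compl, chQ, Finset.mem_filter] at hq
      exact hq ⟨Finset.mem_univ q, i, h⟩
    · exact h
  set a := implFrac (randChoreProb hn w v) with ha
  have hown0 : ∀ (i : Fin n) (q : Fin m), q ∈ chQ v → a q i * v i q = 0 := by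
    intro i q hq
    by_cases h : v i q = 0
    · rw [h, mul_zero]
    · rw [ha, frac_zero hn w v hq h, zero_mul]
  have hanneg : ∀ (q : Fin m) (k : Fin n), 0 ≤ a q k := by
    intro q k
    rw [ha, implFrac]
    apply Finset.sum_nonneg
    intro A _
    apply mul_nonneg (prob_nonneg hn w v A)
    split <;> norm_num
  have hQbpart : ∀ (i k : Fin n), ∑ q ∈ (chQ v)ᶜ, a q k * v i q
      = (∑ q ∈ (chQ v)ᶜ, w q) / n := by
    intro i k
    have : ∀ q ∈ (chQ v)ᶜ, a q k * v i q = w q * (1/n) := by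
      intro q hq
      rw [ha, frac_Qb hn w v hq k, hvQb i q hq]
      ring
    rw [Finset.sum_congr rfl this, ← Finset.sum_mul]
    ring
  have hfv : ∀ i : Fin n, fval (v i) a i = (∑ q ∈ (chQ v)ᶜ, w q) / n := by
    intro i
    rw [fval, ← Finset.sum_add_sum_compl (chQ v) (fun q => a q i * v i q),
      Finset.sum_eq_zero (fun q hq => hown0 i q hq), zero_add, hQbpart i i]
  have hfk : ∀ i k : Fin n, fval (v i) a k ≤ (∑ q ∈ (chQ v)ᶜ, w q) / n := by
    intro i k
    rw [fval, ← Finset.sum_add_sum_compl (chQ v) (fun q => a q k * v i q), hQbpart i k]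
    have h1 : ∑ q ∈ chQ v, a q k * v i q ≤ 0 := by
      apply Finset.sum_nonpos
      intro q _
      calc a q k * v i q ≤ a q k * 0 := mul_le_mul_of_nonneg_left (hvle i q) (hanneg q k)
        _ = 0 := mul_zero _
    linarith
  refine ⟨?_, ?_, ?_, ?_⟩
  · intro i k
    rw [ge_iff_le, hfv i]
    exact hfk i k
  · intro i k
    rw [hfv i, hfv k]
  · intro i
    rw [hfv i, ge_iff_le, div_le_div_iff₀ hn' hn']
    have hsum_le : ∑ j, v i j ≤ ∑ q ∈ (chQ v)ᶜ, w q := by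
      rw [← Finset.sum_add_sum_compl (chQ v) (v i)]
      have h1 : ∑ q ∈ chQ v, v i q ≤ 0 := Finset.sum_nonpos fun q _ => hvle i q
      have h2 : ∑ q ∈ (chQ v)ᶜ, v i q = ∑ q ∈ (chQ v)ᶜ, w q :=
        Finset.sum_congr rfl fun q hq => hvQb i q hq
      linarith
    nlinarith
  · intro A hA
    obtain ⟨⟨σ, hσ⟩, hQ0⟩ := pos_extract hn w v A hA
    exact expost hn w v hw hv A σ hσ hQ0
end
end

section
/- If all n agents share the same additive valuation with v(e) ≤ 0 for every item e, and the items are listed in nonincreasing order of value and allocated round-robin according to an arbitrary permutation σ of {1, ..., n} (the t-th item in the list goes to agent σ(((t-1) mod n) + 1)), then the resulting allocation is equitable up to one item and envy-free up to one item. -/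
open Finset

attribute [local instance] Classical.propDecidable

noncomputable section

/-- if all `n` agents share the same additive chore valuation `v` (each item
has value ≤ 0) and the items, listed in nonincreasing order of value, are allocated
round-robin according to an arbitrary permutation `σ` of the agents, then the resulting
allocation is equitable up to one item and envy-free up to one item (the two notions
coincide for identical valuations). -/
theorem roundRobin_identical_chores_EQ1_EF1 (n m : ℕ) (hn : 0 < n)
    (v : Fin m → ℝ) (hv : ∀ e, v e ≤ 0)
    (L : List (Fin m)) (hnd : L.Nodup) (hall : ∀ q, q ∈ L)
    (hsorted : L.Pairwise (fun a b => v a ≥ v b))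
    (σ : Equiv.Perm (Fin n))
    (A : Fin m → Fin n)
    (hA : ∀ q, A q = σ ⟨L.idxOf q % n, Nat.mod_lt _ hn⟩) :
    ∀ i j : Fin n,
      sval v (bundle A i) ≥ sval v (bundle A j) ∨
      ∃ e ∈ bundle A i ∪ bundle A j,
        sval v ((bundle A i).erase e) ≥ sval v ((bundle A j).erase e) := by
  have hlen : L.length = m := by
    apply le_antisymm
    · simpa using hnd.length_le_card
    · have h1 : (Finset.univ : Finset (Fin m)) ⊆ L.toFinset := by
        intro x _; simpa using hall x
      have := Finset.card_le_card h1
      simpa [List.toFinset_card_of_nodup hnd] using this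
  have hidx : ∀ x : Fin m, L.idxOf x < L.length := fun x =>
    List.idxOf_lt_length_iff.2 (hall x)
  have hgetx : ∀ x : Fin m, L.get ⟨L.idxOf x, hidx x⟩ = x := fun x =>
    List.idxOf_get (hidx x)
  have hmem : ∀ (x : Fin m) (k : Fin n),
      x ∈ bundle A k ↔ L.idxOf x % n = (σ.symm k : ℕ) := by
    intro x k
    simp only [bundle, Finset.mem_filter, Finset.mem_univ, true_and, hA x]
    constructor
    · intro h
      have : (⟨L.idxOf x % n, Nat.mod_lt _ hn⟩ : Fin n) = σ.symm k := by
        rw [← h]; simp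
      exact congrArg Fin.val this
    · intro h
      have : (⟨L.idxOf x % n, Nat.mod_lt _ hn⟩ : Fin n) = σ.symm k := Fin.ext h
      rw [this]; simp
  intro i j
  by_cases hij : i = j
  · left; subst hij; exact le_refl _
  set p : ℕ := (σ.symm i : ℕ) with hp_def
  set q : ℕ := (σ.symm j : ℕ) with hq_def
  have hp : p < n := (σ.symm i).isLt
  have hq : q < n := (σ.symm j).isLt
  have hpq : p ≠ q := by
    intro h
    apply hij
    have : σ.symm i = σ.symm j := Fin.ext h
    exact σ.symm.injective this
  set d : ℕ := (q + n - p) % n with hd_def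
  have hdn : d < n := Nat.mod_lt _ hn
  have hpd : (p + d) % n = q := by
    have h1 : (p + d) % n = (p + (q + n - p)) % n :=
      ((Nat.mod_modEq (q + n - p) n).add_left p : _)
    have h2 : p + (q + n - p) = q + n := by omega
    rw [h1, h2, Nat.add_mod_right, Nat.mod_eq_of_lt hq]
  have hd1 : d ≠ 0 := by
    intro h
    rw [h, Nat.add_zero, Nat.mod_eq_of_lt hp] at hpd
    exact hpq hpd
  by_cases hS : (bundle A i).Nonempty
  · obtain ⟨e, he, hemax⟩ := Finset.exists_max_image (bundle A i) (fun x => L.idxOf x) hS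
    right
    refine ⟨e, Finset.mem_union_left _ he, ?_⟩
    have heT : e ∉ bundle A j := by
      intro h
      exact hpq (((hmem e i).1 he).symm.trans ((hmem e j).1 h))
    rw [Finset.erase_eq_of_notMem heT]
    set S := (bundle A i).erase e with hS_def
    -- key bound for elements of S
    have hkey : ∀ x ∈ S, L.idxOf x + d < m := by
      intro x hx
      obtain ⟨hxe, hxi⟩ := Finset.mem_erase.1 hx
      have hle : L.idxOf x ≤ L.idxOf e := hemax x hxi
      have hne : L.idxOf x ≠ L.idxOf e := by
        intro h
        apply hxe
        rw [← hgetx x, ← hgetx e]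
        congr 1
        exact Fin.ext h
      have hlt : L.idxOf x < L.idxOf e := lt_of_le_of_ne hle hne
      have hmod : L.idxOf x % n = L.idxOf e % n := by
        rw [(hmem x i).1 hxi, (hmem e i).1 he]
      have hdvd : n ∣ L.idxOf e - L.idxOf x :=
        (Nat.modEq_iff_dvd' hle).1 hmod
      have hnle : n ≤ L.idxOf e - L.idxOf x :=
        Nat.le_of_dvd (by omega) hdvd
      have := hidx e
      omega
    set φ : Fin m → Fin m := fun x =>
      if h : L.idxOf x + d < L.length then L.get ⟨L.idxOf x + d, h⟩ else x with hφ_def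
    have hφval : ∀ x ∈ S, ∃ h : L.idxOf x + d < L.length,
        φ x = L.get ⟨L.idxOf x + d, h⟩ := by
      intro x hx
      have h : L.idxOf x + d < L.length := by rw [hlen]; exact hkey x hx
      exact ⟨h, by simp [hφ_def, h]⟩
    have hφidx : ∀ x ∈ S, L.idxOf (φ x) = L.idxOf x + d := by
      intro x hx
      obtain ⟨h, hval⟩ := hφval x hx
      rw [hval]
      exact List.get_idxOf hnd _
    have hφT : ∀ x ∈ S, φ x ∈ bundle A j := by
      intro x hx
      rw [hmem]
      have hxi : x ∈ bundle A i := (Finset.mem_erase.1 hx).2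
      rw [hφidx x hx, Nat.add_mod, (hmem x i).1 hxi, Nat.mod_eq_of_lt hdn, hpd]
    have hφv : ∀ x ∈ S, v (φ x) ≤ v x := by
      intro x hx
      obtain ⟨h, hval⟩ := hφval x hx
      rw [hval]
      conv_rhs => rw [← hgetx x]
      exact hsorted.rel_get_of_lt (by simp [Fin.lt_def]; omega)
    have hφinj : Set.InjOn φ S := by
      intro x hx y hy hxy
      obtain ⟨h1, hval1⟩ := hφval x hx
      obtain ⟨h2, hval2⟩ := hφval y hy
      rw [hval1, hval2] at hxy
      have := (hnd.get_inj_iff).1 hxy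
      have hidxeq : L.idxOf x = L.idxOf y := by
        have := congrArg Fin.val this
        simpa using this
      rw [← hgetx x, ← hgetx y]
      congr 1
      exact Fin.ext hidxeq
    have hsub : S.image φ ⊆ bundle A j := by
      intro y hy
      obtain ⟨x, hx, rfl⟩ := Finset.mem_image.1 hy
      exact hφT x hx
    have h1 : sval v (bundle A j) ≤ sval v (S.image φ) := by
      have := Finset.sum_sdiff (f := v) hsub
      have h2 : ∑ y ∈ bundle A j \ S.image φ, v y ≤ 0 :=
        Finset.sum_nonpos fun y _ => hv y
      unfold sval
      linarith [this]
    have h2 : sval v (S.image φ) ≤ sval v S := by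
      unfold sval
      rw [Finset.sum_image (fun x hx y hy h => hφinj hx hy h)]
      exact Finset.sum_le_sum hφv
    exact le_trans h1 h2
  · left
    rw [Finset.not_nonempty_iff_eq_empty] at hS
    rw [hS]
    unfold sval
    simp only [Finset.sum_empty]
    exact Finset.sum_nonpos fun x _ => hv x

end
end

section
/- If all n agents share the same additive valuation with v(e) ≤ 0 for every item e, and the items are listed in nonincreasing order of value and allocated round-robin according to an arbitrary permutation σ of {1, ..., n} (the t-th item in the list goes to agent σ(((t-1) mod n) + 1)), producing allocation A* = (A*_1, ..., A*_n), then min_{i ∈ [n]} v(A*_i) ≥ 2 · max_B min_{i ∈ [n]} v(B_i), where B ranges over all allocations of the items; i.e., the round-robin allocation is a 2-approximation of the maximum egalitarian welfare. -/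
open Finset

attribute [local instance] Classical.propDecidable

noncomputable section

lemma sum_le_of_subset_nonpos {α : Type*} [DecidableEq α] {s t : Finset α} (h : s ⊆ t)
    (f : α → ℝ) (hf : ∀ a, f a ≤ 0) : ∑ a ∈ t, f a ≤ ∑ a ∈ s, f a := by
  rw [← Finset.sum_sdiff h]
  have : ∑ a ∈ t \ s, f a ≤ 0 := Finset.sum_nonpos fun a _ => hf a
  linarith

/-- Splitting an interval into consecutive blocks of length `n`. -/
lemma sum_blocks (c : ℕ → ℝ) (p n : ℕ) (K : ℕ) :
    ∑ j ∈ Finset.Ico p (p+K*n), c j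
      = ∑ k ∈ Finset.range K, ∑ j ∈ Finset.Ico (p+k*n) (p+(k+1)*n), c j := by
  induction K with
  | zero => simp
  | succ K ih =>
      rw [Finset.sum_range_succ, ← ih, Finset.sum_Ico_consecutive]
      · omega
      · have h : K * n ≤ (K+1) * n := Nat.mul_le_mul_right n (Nat.le_succ K)
        omega

lemma key_ineq (n : ℕ) (hn : 0 < n) (len : ℕ) (c : ℕ → ℝ)
    (hc0 : ∀ j, c j ≤ 0)
    (hcbig : ∀ j, len ≤ j → c j = 0)
    (hmono : ∀ j j', j ≤ j' → j' < len → c j' ≤ c j)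
    (p : ℕ) (hp : p < n) :
    ∃ a : ℕ, (n:ℝ) * c a + ∑ j ∈ Finset.range len, c j
        ≤ n * ∑ j ∈ (Finset.range len).filter (fun j => j % n = p), c j := by
  rcases lt_or_ge p len with hplen | hplen
  swap
  · refine ⟨len, ?_⟩
    have hT : (Finset.range len).filter (fun j => j % n = p) = ∅ := by
      ext j
      simp only [Finset.mem_filter, Finset.mem_range, Finset.notMem_empty, iff_false, not_and]
      intro hj hmod
      have := Nat.mod_le j n
      omega
    rw [hT, hcbig len le_rfl]
    simp only [Finset.sum_empty, mul_zero, zero_add]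
    exact Finset.sum_nonpos fun j _ => hc0 j
  · set K' := (len - p - 1) / n with hK'
    have hanchor : ∀ k, p + k * n < len ↔ k ≤ K' := by
      intro k
      rw [hK', Nat.le_div_iff_mul_le hn]
      omega
    have hT : (Finset.range len).filter (fun j => j % n = p)
        = (Finset.range (K'+1)).image (fun k => p + k * n) := by
      ext j
      simp only [Finset.mem_filter, Finset.mem_range, Finset.mem_image]
      constructor
      · rintro ⟨hj, hmod⟩
        have hdm := Nat.mod_add_div j n
        have hcm : (j / n) * n = n * (j / n) := Nat.mul_comm _ _
        refine ⟨j / n, ?_, ?_⟩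
        · have hj' : p + (j / n) * n < len := by omega
          have := (hanchor (j / n)).1 hj'
          omega
        · omega
      · rintro ⟨k, hk, rfl⟩
        refine ⟨(hanchor k).2 (by omega), ?_⟩
        rw [Nat.add_mul_mod_self_right, Nat.mod_eq_of_lt hp]
    have hinj : ∀ a ∈ Finset.range (K'+1), ∀ b ∈ Finset.range (K'+1),
        p + a * n = p + b * n → a = b := by
      intro a _ b _ h
      have : a * n = b * n := by omega
      exact Nat.eq_of_mul_eq_mul_right hn this
    refine ⟨p + K' * n, ?_⟩
    rw [hT, Finset.sum_image hinj, Finset.sum_range_succ, mul_add]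
    have hmain : ∑ j ∈ Finset.range len, c j ≤ (n:ℝ) * ∑ k ∈ Finset.range K', c (p + k * n) := by
      have hlast : p + K' * n < len := (hanchor K').2 le_rfl
      have hsub : Finset.Ico p (p + K' * n) ⊆ Finset.range len := by
        intro j hj
        simp only [Finset.mem_Ico] at hj
        simp only [Finset.mem_range]
        omega
      have h1 : ∑ j ∈ Finset.range len, c j ≤ ∑ j ∈ Finset.Ico p (p + K' * n), c j :=
        sum_le_of_subset_nonpos hsub c hc0
      rw [sum_blocks c p n K', Finset.mul_sum] at *
      refine h1.trans (Finset.sum_le_sum fun k hk => ?_)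
      simp only [Finset.mem_range] at hk
      have hup : p + (k+1) * n ≤ p + K' * n := by
        have := Nat.mul_le_mul_right n (by omega : k + 1 ≤ K')
        omega
      have hcard : (Finset.Ico (p+k*n) (p+(k+1)*n)).card = n := by
        rw [Nat.card_Ico]
        have : (k+1) * n = k * n + n := by ring
        omega
      have hb := Finset.sum_le_card_nsmul (Finset.Ico (p+k*n) (p+(k+1)*n)) c
        (c (p + k*n)) (fun j hj => by
          simp only [Finset.mem_Ico] at hj
          exact hmono (p + k*n) j (by omega) (by omega))
      rw [hcard, nsmul_eq_mul] at hb
      exact hb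
    linarith

/-- if all `n` agents share the same additive chore valuation `v` (each item
has value ≤ 0) and the items, listed in nonincreasing order of value, are allocated
round-robin according to an arbitrary permutation `σ`, then the resulting allocation `A` is
a 2-approximation of the optimal egalitarian welfare:
`min_i v(A_i) ≥ 2 · max_B min_i v(B_i)`. -/
theorem roundRobin_identical_chores_EWM_2approx (n m : ℕ) (hn : 0 < n)
    (v : Fin m → ℝ) (hv : ∀ e, v e ≤ 0)
    (L : List (Fin m)) (hnd : L.Nodup) (hall : ∀ q, q ∈ L)
    (hsorted : L.Pairwise (fun a b => v a ≥ v b))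
    (σ : Equiv.Perm (Fin n))
    (A : Fin m → Fin n)
    (hA : ∀ q, A q = σ ⟨L.idxOf q % n, Nat.mod_lt _ hn⟩) :
    Finset.univ.inf' ⟨⟨0, hn⟩, Finset.mem_univ _⟩ (fun i => sval v (bundle A i)) ≥
      2 * Finset.univ.sup' ⟨fun _ => ⟨0, hn⟩, Finset.mem_univ _⟩
        (fun B : Fin m → Fin n =>
          Finset.univ.inf' ⟨⟨0, hn⟩, Finset.mem_univ _⟩ (fun i => sval v (bundle B i))) := by
  classical
  set len := L.length with hlendef
  have hidx : ∀ q : Fin m, L.idxOf q < len := fun q => List.idxOf_lt_length_iff.2 (hall q)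
  set c : ℕ → ℝ := fun j => if h : j < len then v (L.get ⟨j, h⟩) else 0 with hc
  have hc0 : ∀ j, c j ≤ 0 := by
    intro j
    simp only [hc]
    split
    · exact hv _
    · exact le_refl 0
  have hcbig : ∀ j, len ≤ j → c j = 0 := by
    intro j hj
    simp only [hc, dif_neg (by omega : ¬ j < len)]
  have hmono : ∀ j j', j ≤ j' → j' < len → c j' ≤ c j := by
    intro j j' hle hj'
    have hj : j < len := lt_of_le_of_lt hle hj'
    simp only [hc, dif_pos hj, dif_pos hj']
    rcases eq_or_lt_of_le hle with rfl | hlt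
    · exact le_refl _
    · exact hsorted.rel_get_of_lt (by exact hlt)
  set W : ℝ := ∑ j ∈ Finset.range len, c j with hW
  -- W equals total value
  have hWv : W = ∑ q : Fin m, v q := by
    rw [hW, ← Fin.sum_univ_eq_sum_range (fun j => c j) len]
    apply Fintype.sum_bijective (fun j : Fin len => L.get j)
    · constructor
      · exact List.nodup_iff_injective_get.1 hnd
      · intro q
        exact ⟨⟨L.idxOf q, hidx q⟩, List.idxOf_get (hidx q)⟩
    · intro j
      simp only [hc, dif_pos j.isLt]
      rfl
  -- fiberwise: sum of bundle values is total value
  have hfib : ∀ B : Fin m → Fin n, ∑ i : Fin n, sval v (bundle B i) = ∑ q : Fin m, v q := by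
    intro B
    simp only [sval, bundle, Finset.sum_filter]
    rw [Finset.sum_comm]
    simp
  -- bundle sum as position sum
  have hbundle : ∀ i : Fin n, sval v (bundle A i)
      = ∑ j ∈ (Finset.range len).filter (fun j => j % n = ((σ.symm i : Fin n) : ℕ)), c j := by
    intro i
    have himg : (Finset.range len).filter (fun j => j % n = ((σ.symm i : Fin n) : ℕ))
        = (bundle A i).image (fun q => L.idxOf q) := by
      ext j
      simp only [Finset.mem_filter, Finset.mem_range, Finset.mem_image, bundle,
        Finset.mem_filter, Finset.mem_univ, true_and]
      constructor
      · rintro ⟨hj, hmod⟩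
        refine ⟨L.get ⟨j, hj⟩, ?_, ?_⟩
        · rw [hA, List.get_idxOf hnd]
          apply (Equiv.apply_eq_iff_eq_symm_apply σ).2
          exact Fin.ext hmod
        · exact List.get_idxOf hnd _
      · rintro ⟨q, hq, rfl⟩
        refine ⟨hidx q, ?_⟩
        rw [hA] at hq
        have := (Equiv.apply_eq_iff_eq_symm_apply σ).1 hq
        exact congrArg Fin.val this
    have hinj' : ∀ q ∈ bundle A i, ∀ q' ∈ bundle A i, L.idxOf q = L.idxOf q' → q = q' := by
      intro q _ q' _ h
      rw [← List.idxOf_get (hidx q), ← List.idxOf_get (hidx q')]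
      exact congrArg L.get (Fin.ext h)
    rw [himg, Finset.sum_image hinj']
    apply Finset.sum_congr rfl
    intro q _
    simp only [hc, dif_pos (hidx q)]
    rw [List.idxOf_get (hidx q)]
  -- bounds for arbitrary allocation B
  have hnR : (0:ℝ) < (n:ℝ) := by exact_mod_cast hn
  set OPT := Finset.univ.sup' ⟨fun _ => ⟨0, hn⟩, Finset.mem_univ _⟩
      (fun B : Fin m → Fin n =>
        Finset.univ.inf' ⟨⟨0, hn⟩, Finset.mem_univ _⟩ (fun i => sval v (bundle B i))) with hOPT
  rw [ge_iff_le]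
  apply Finset.le_inf'
  intro i _
  set p := ((σ.symm i : Fin n) : ℕ) with hpdef
  have hp : p < n := (σ.symm i).isLt
  obtain ⟨a, hkey⟩ := key_ineq n hn len c hc0 hcbig hmono p hp
  -- OPT ≤ c a and OPT ≤ W / n
  have hOPTle : 2 * OPT ≤ c a + W / n := by
    have h2 : OPT ≤ (c a + W / n) / 2 := by
      apply Finset.sup'_le
      intro B _
      set IB := Finset.univ.inf' ⟨⟨0, hn⟩, Finset.mem_univ _⟩ (fun i => sval v (bundle B i))
        with hIB
      have hB1 : IB ≤ c a := by
        rcases lt_or_ge a len with halen | halen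
        · set e := L.get ⟨a, halen⟩ with he
          have hmem : e ∈ bundle B (B e) := by
            simp [bundle]
          have h3 : sval v (bundle B (B e)) ≤ v e := by
            have := sum_le_of_subset_nonpos (Finset.singleton_subset_iff.2 hmem) v hv
            simpa [sval] using this
          have h4 : IB ≤ sval v (bundle B (B e)) :=
            Finset.inf'_le _ (Finset.mem_univ _)
          have h5 : c a = v e := by simp only [hc, dif_pos halen, he]
          linarith
        · rw [hcbig a halen]
          have h4 : IB ≤ sval v (bundle B ⟨0, hn⟩) := Finset.inf'_le _ (Finset.mem_univ _)
          have h5 : sval v (bundle B ⟨0, hn⟩) ≤ 0 := Finset.sum_nonpos fun q _ => hv q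
          linarith
      have hB2 : IB ≤ W / n := by
        rw [le_div_iff₀ hnR]
        have h6 : ∑ _i : Fin n, IB ≤ ∑ i : Fin n, sval v (bundle B i) :=
          Finset.sum_le_sum fun i _ => Finset.inf'_le _ (Finset.mem_univ _)
        rw [hfib B, ← hWv] at h6
        have h7 : ∑ _i : Fin n, IB = (n:ℝ) * IB := by
          simp [Finset.sum_const, Finset.card_univ, mul_comm]
        rw [h7] at h6
        linarith [mul_comm IB (n:ℝ)]
      linarith
    linarith
  rw [hbundle i]
  have hdiv : c a + W / n ≤ ∑ j ∈ (Finset.range len).filter (fun j => j % n = p), c j := by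
    have h8 : (n:ℝ) * (c a + W / n) = n * c a + W := by
      rw [mul_add, mul_div_cancel₀ _ (ne_of_gt hnR)]
    have h9 : (n:ℝ) * (c a + W / n)
        ≤ n * ∑ j ∈ (Finset.range len).filter (fun j => j % n = p), c j := by
      rw [h8]; exact hkey
    exact le_of_mul_le_mul_left h9 hnR
  linarith
end
end

section
/- For every n ≥ 2 consider n agents and m = n(n-1)+1 chores with identical additive valuations: v(e_j) = -1 for all j ≤ n(n-1) and v(e_m) = -n. Then: (a) the maximum egalitarian welfare over all deterministic allocations equals -n; and (b) the round-robin allocation obtained by listing the items in nonincreasing order of value (so the value -n item is last) and assigning the t-th listed item to agent ((t-1) mod n) + 1 gives agent 1 the bundle consisting of n-1 items of value -1 plus the item of value -n, so its egalitarian welfare is -(2n-1). Hence this allocation, which lies in the support of RandChore's output, achieves only a (2n-1)/n fraction of the optimal egalitarian welfare; in particular RandChore is not an ex-post ((2n-1)/n - ε)-approximation of the maximum egalitarian welfare for any ε > 0. -/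
open Finset

attribute [local instance] Classical.propDecidable

noncomputable section

def big (n : ℕ) : Fin (n * (n - 1) + 1) := ⟨n * (n - 1), Nat.lt_succ_self _⟩

lemma sval_eq_s12 {n : ℕ} (v : Fin (n * (n - 1) + 1) → ℝ)
    (hv : ∀ j, v j = if (j : ℕ) < n * (n - 1) then -1 else -(n : ℝ))
    (S : Finset (Fin (n * (n - 1) + 1))) :
    sval v S = -(S.card : ℝ) - (if big n ∈ S then (n : ℝ) - 1 else 0) := by
  have hval : ∀ j, v j = -1 + (if j = big n then -((n : ℝ) - 1) else 0) := by
    intro j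
    rw [hv]
    rcases lt_or_ge (j : ℕ) (n * (n - 1)) with h | h
    · have : j ≠ big n := by
        intro hj; rw [hj] at h; simp [big] at h
      simp [h, this]
    · have hj : j = big n := by
        apply Fin.ext
        have := j.isLt
        simp [big]; omega
      have hb : ¬ (((big n : Fin (n * (n - 1) + 1)) : ℕ) < n * (n - 1)) := by
        simp [big]
      simp [hj, hb]; ring
  unfold sval
  rw [Finset.sum_congr rfl (fun j _ => hval j), Finset.sum_add_distrib,
    Finset.sum_const, Finset.sum_ite_eq' S (big n) (fun _ => -((n : ℝ) - 1))]
  split <;> simp <;> ring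

lemma total_sum {n : ℕ} (hn2 : 2 ≤ n) (v : Fin (n * (n - 1) + 1) → ℝ)
    (hv : ∀ j, v j = if (j : ℕ) < n * (n - 1) then -1 else -(n : ℝ)) :
    ∑ j, v j = -((n : ℝ) * n) := by
  rw [Fin.sum_univ_castSucc]
  have h1 : ∀ j : Fin (n * (n - 1)), v j.castSucc = -1 := by
    intro j; rw [hv]; simp [j.isLt]
  have h2 : v (Fin.last _) = -(n : ℝ) := by
    rw [hv]; simp [Fin.last]
  rw [Finset.sum_congr rfl (fun j _ => h1 j), h2, Finset.sum_const]
  simp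
  rcases Nat.exists_eq_add_of_le hn2 with ⟨d, rfl⟩
  have h3 : 2 + d - 1 = d + 1 := by omega
  rw [h3]
  push_cast
  ring

section cards
variable {n : ℕ} (hn2 : 2 ≤ n) (A : Fin (n * (n - 1) + 1) → Fin n)
  (hA : ∀ q, A q = ⟨(q : ℕ) % n, Nat.mod_lt _ (lt_of_lt_of_le Nat.zero_lt_two hn2)⟩)

include hA in
lemma mem_bundleA {j : Fin (n * (n - 1) + 1)} {i : Fin n} :
    j ∈ bundle A i ↔ (j : ℕ) % n = (i : ℕ) := by
  simp [bundle, hA, Fin.ext_iff]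

include hn2 hA in
lemma card_bundleA_le (i : Fin n) : (bundle A i).card ≤ n := by
  have h : ∀ j ∈ bundle A i, (j : ℕ) / n ∈ Finset.range n := by
    intro j hj
    have h1 := j.isLt
    have h2 : n * (n - 1) + 1 ≤ n * n := by
      have := Nat.mul_le_mul_left n (by omega : n - 1 + 1 ≤ n)
      calc n * (n - 1) + 1 ≤ n * (n - 1) + n := by omega
        _ = n * (n - 1 + 1) := by ring
        _ ≤ n * n := by omega
    simp only [Finset.mem_range]
    exact Nat.div_lt_of_lt_mul (by omega)
  calc (bundle A i).card ≤ (Finset.range n).card := ?_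
    _ = n := Finset.card_range n
  apply Finset.card_le_card_of_injOn _ h
  intro a ha b hb hab
  simp only [Finset.mem_coe] at ha hb
  rw [mem_bundleA hn2 A hA] at ha hb
  have hab' : (a : ℕ) / n = (b : ℕ) / n := hab
  apply Fin.ext
  have h1 := Nat.div_add_mod (a : ℕ) n
  rw [hab'] at h1
  have h2 := Nat.div_add_mod (b : ℕ) n
  omega

include hn2 hA in
lemma card_bundleA_zero : (bundle A ⟨0, lt_of_lt_of_le Nat.zero_lt_two hn2⟩).card = n := by
  have hn0 : 0 < n := by omega
  have key : (bundle A ⟨0, by omega⟩).card = (Finset.range n).card := by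
    apply Finset.card_bij' (s := bundle A ⟨0, by omega⟩) (t := Finset.range n)
      (fun j _ => (j : ℕ) / n)
      (fun k hk => (⟨k * n, by
        have hk' : k ≤ n - 1 := by
          have := Finset.mem_range.mp hk; omega
        have : k * n ≤ (n - 1) * n := Nat.mul_le_mul_right n hk'
        have h2 : (n - 1) * n = n * (n - 1) := Nat.mul_comm _ _
        omega⟩ : Fin (n * (n - 1) + 1)))
    case hi =>
      intro j hj
      rw [mem_bundleA hn2 A hA] at hj
      have h1 := j.isLt
      simp only [Finset.mem_range]
      have := Nat.div_add_mod (j : ℕ) n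
      rcases Nat.lt_or_ge ((j : ℕ) / n) n with h | h
      · exact h
      · exfalso
        have h3 : n * n ≤ n * ((j:ℕ)/n) := Nat.mul_le_mul_left n h
        have h4 : n * (n - 1) ≤ n * n := Nat.mul_le_mul_left n (Nat.sub_le n 1)
        have h5 : n * (n-1) + n = n * n := by
          have h6 : n - 1 + 1 = n := by omega
          calc n * (n-1) + n = n * (n - 1 + 1) := by ring
            _ = n * n := by rw [h6]
        omega
    case hj =>
      intro k hk
      rw [mem_bundleA hn2 A hA]
      simp [Nat.mul_mod_left]
    case left_inv =>
      intro j hj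
      rw [mem_bundleA hn2 A hA] at hj
      apply Fin.ext
      simp only
      have h1 := Nat.div_add_mod (j : ℕ) n
      have h2 : (j:ℕ)/n*n = n*((j:ℕ)/n) := Nat.mul_comm _ _
      have hj0 : (j:ℕ) % n = 0 := hj
      omega
    case right_inv =>
      intro k hk
      show k * n / n = k
      exact Nat.mul_div_cancel k hn0
  rw [key, Finset.card_range]

include hn2 hA in
lemma big_mem_bundleA_iff (i : Fin n) : big n ∈ bundle A i ↔ (i : ℕ) = 0 := by
  rw [mem_bundleA hn2 A hA]
  simp only [big]
  rw [Nat.mul_mod_right]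
  omega

end cards

/-- for `n ≥ 2` agents and `m = n(n-1)+1` chores with identical valuations
(`n(n-1)` chores of value `-1` and a last chore of value `-n`): (a) the optimal egalitarian
welfare over deterministic allocations is `-n`; and (b) the round-robin allocation `A`
obtained by listing the items in nonincreasing value order (the `-n` item last) under the
identity permutation — which is in the support of `RandChore` — gives agent `1` a bundle of
`n` items (namely `n-1` items of value `-1` plus the `-n` item) of value `-(2n-1)`, so its
egalitarian welfare is `-(2n-1)`. Hence `RandChore` is not ex-post
`((2n-1)/n - ε)`-approximate for the optimal egalitarian welfare for any `ε > 0`. -/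
theorem randChore_EWM_lower_bound_instance (n : ℕ) (hn2 : 2 ≤ n)
    (v : Fin (n * (n - 1) + 1) → ℝ)
    (hv : ∀ j, v j = if (j : ℕ) < n * (n - 1) then -1 else -(n : ℝ))
    (A : Fin (n * (n - 1) + 1) → Fin n)
    (hA : ∀ q, A q = ⟨(q : ℕ) % n, Nat.mod_lt _ (by omega)⟩) :
    -- (a) the optimal egalitarian welfare equals -n
    (Finset.univ.sup' ⟨fun _ => ⟨0, by omega⟩, Finset.mem_univ _⟩
        (fun B : Fin (n * (n - 1) + 1) → Fin n =>
          Finset.univ.inf' ⟨⟨0, by omega⟩, Finset.mem_univ _⟩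
            (fun i => sval v (bundle B i))) = -(n : ℝ)) ∧
    -- (b) agent 1 (index 0) receives n items of total value -(2n-1)
    (bundle A ⟨0, by omega⟩).card = n ∧
    sval v (bundle A ⟨0, by omega⟩) = -(2 * (n : ℝ) - 1) ∧
    -- and the egalitarian welfare of A equals -(2n-1)
    Finset.univ.inf' ⟨⟨0, by omega⟩, Finset.mem_univ _⟩
        (fun i => sval v (bundle A i)) = -(2 * (n : ℝ) - 1) := by
  have hn0 : 0 < n := by omega
  have hnR : (2 : ℝ) ≤ (n : ℝ) := by exact_mod_cast hn2
  have hsval := sval_eq_s12 v hv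
  have hcard0 : (bundle A ⟨0, by omega⟩).card = n := card_bundleA_zero hn2 A hA
  have hbig0 : big n ∈ bundle A ⟨0, by omega⟩ :=
    (big_mem_bundleA_iff hn2 A hA _).mpr rfl
  have hsvalA0 : sval v (bundle A ⟨0, by omega⟩) = -(2 * (n : ℝ) - 1) := by
    have h := hsval (bundle A ⟨0, by omega⟩)
    simp only [hcard0, hbig0, if_true] at h
    rw [h]; ring
  -- (b) inf for A
  have hinfA : Finset.univ.inf' ⟨⟨0, by omega⟩, Finset.mem_univ _⟩
      (fun i => sval v (bundle A i)) = -(2 * (n : ℝ) - 1) := by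
    apply le_antisymm
    · exact le_trans (Finset.inf'_le _ (Finset.mem_univ ⟨0, by omega⟩)) (le_of_eq hsvalA0)
    · apply Finset.le_inf'
      intro i _
      rw [hsval]
      have hc := card_bundleA_le hn2 A hA i
      have hcR : ((bundle A i).card : ℝ) ≤ (n : ℝ) := by exact_mod_cast hc
      split <;> linarith
  refine ⟨?_, hcard0, hsvalA0, hinfA⟩
  -- (a)
  apply le_antisymm
  · -- upper bound: every allocation has an agent at ≤ -n
    apply Finset.sup'_le
    intro B _
    obtain ⟨i, _, hi⟩ : ∃ i ∈ Finset.univ, sval v (bundle B i) ≤ -(n : ℝ) := by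
      apply Finset.exists_le_of_sum_le ⟨⟨0, hn0⟩, Finset.mem_univ _⟩
      have hsum : ∑ i, sval v (bundle B i) = ∑ j, v j := by
        simpa [bundle, sval] using Finset.sum_fiberwise Finset.univ B v
      rw [hsum, total_sum hn2 v hv, Finset.sum_const]
      have hcu : (Finset.univ : Finset (Fin n)).card = n := by simp
      rw [hcu, nsmul_eq_mul]
      exact le_of_eq (by ring)
    exact le_trans (Finset.inf'_le _ (Finset.mem_univ i)) hi
  · -- lower bound: the balanced allocation B
    have hBpf : ∀ j : Fin (n * (n - 1) + 1), (j : ℕ) < n * (n - 1) → (j : ℕ) / n + 1 < n := by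
      intro j hj
      have : (j : ℕ) / n < n - 1 := Nat.div_lt_of_lt_mul hj
      omega
    set B : Fin (n * (n - 1) + 1) → Fin n := fun j =>
      if h : (j : ℕ) < n * (n - 1) then ⟨(j : ℕ) / n + 1, hBpf j h⟩ else ⟨0, hn0⟩ with hB
    refine le_trans ?_ (Finset.le_sup' _ (Finset.mem_univ B))
    apply Finset.le_inf'
    intro i _
    rw [hsval]
    by_cases hi0 : (i : ℕ) = 0
    · -- agent 0 gets only the big item
      have hsub : bundle B i ⊆ {big n} := by
        intro j hj
        simp only [bundle, Finset.mem_filter, Finset.mem_univ, true_and] at hj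
        simp only [Finset.mem_singleton]
        by_contra hne
        have hlt : (j : ℕ) < n * (n - 1) := by
          have h1 := j.isLt
          have h2 : (j : ℕ) ≠ n * (n - 1) := by
            intro h; exact hne (Fin.ext h)
          omega
        rw [hB] at hj
        simp only [dif_pos hlt] at hj
        have hji : (j : ℕ) / n + 1 = (i : ℕ) := by
          rw [← hj]
        rw [hi0] at hji
        exact Nat.succ_ne_zero _ hji
      have hcle : ((bundle B i).card : ℝ) ≤ 1 := by
        have := Finset.card_le_card hsub
        rw [Finset.card_singleton] at this
        exact_mod_cast this
      split <;> linarith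
    · -- other agents get only unit items
      have hbig : big n ∉ bundle B i := by
        simp only [bundle, Finset.mem_filter, Finset.mem_univ, true_and]
        intro h
        rw [hB] at h
        have hNlt : ¬ ((big n : ℕ) < n * (n - 1)) := by simp [big]
        simp only [dif_neg hNlt] at h
        exact hi0 (by rw [← h])
      rw [if_neg hbig]
      have hcn : (bundle B i).card ≤ n := by
        calc (bundle B i).card ≤ (Finset.range n).card := ?_
          _ = n := Finset.card_range n
        refine Finset.card_le_card_of_injOn (fun j => (j : ℕ) % n) ?_ ?_
        · intro j _
          simp only [Finset.mem_coe, Finset.mem_range]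
          exact Nat.mod_lt _ hn0
        · intro a ha b hb hab
          simp only [Finset.mem_coe, bundle, Finset.mem_filter, Finset.mem_univ,
            true_and] at ha hb
          have hab' : (a : ℕ) % n = (b : ℕ) % n := hab
          have hla : (a : ℕ) < n * (n - 1) := by
            by_contra h
            rw [hB] at ha; simp only [dif_neg h] at ha
            exact hi0 (by rw [← ha])
          have hlb : (b : ℕ) < n * (n - 1) := by
            by_contra h
            rw [hB] at hb; simp only [dif_neg h] at hb
            exact hi0 (by rw [← hb])
          rw [hB] at ha hb
          simp only [dif_pos hla] at ha
          simp only [dif_pos hlb] at hb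
          have hda : (a : ℕ) / n + 1 = (i : ℕ) := by rw [← ha]
          have hdb : (b : ℕ) / n + 1 = (i : ℕ) := by rw [← hb]
          apply Fin.ext
          have h1 := Nat.div_add_mod (a : ℕ) n
          have h2 := Nat.div_add_mod (b : ℕ) n
          have h3 : (a : ℕ) / n = (b : ℕ) / n := by omega

          rw [h3] at h1
          omega
      have hcnR : ((bundle B i).card : ℝ) ≤ (n : ℝ) := by exact_mod_cast hcn
      linarith
end
end
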